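/- arXiv:2407.14444 — 4 statements merged into one kernel-verified Lean document; each statement's English description precedes it below -/
import Mathlib

section
/- Let p ≥ 1 and let f : ℝ → ℂ be almost periodic. (i) If there exists c ∈ ℂ such that f(t) → c as t → +∞, then f(t) = c for all t ∈ ℝ. (ii) If ∫_0^∞ |f(t)|^p dt < ∞, then f(t) = 0 for all t ∈ ℝ. -/
open MeasureTheory Filter Topology
open scoped ENNReal NNReal

noncomputable section

/-- Bochner-almost periodic function `ℝ → ℂ`. -/
def AP (f : ℝ → ℂ) : Prop :=
  Continuous f ∧ ∀ b : ℕ → ℝ, ∃ φ : ℕ → ℕ, StrictMono φ ∧ ∃ g : ℝ → ℂ,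
    TendstoUniformly (fun m t => f (t + b (φ m))) g atTop

/-- Bounded continuous. -/
def BCb (f : ℝ → ℂ) : Prop := Continuous f ∧ ∃ C : ℝ, ∀ t, ‖f t‖ ≤ C

def BC0 (f : ℝ → ℂ) : Prop := BCb f ∧ Tendsto f atTop (nhds 0)

def C00 (f : ℝ → ℂ) : Prop := BC0 f ∧ Tendsto f atBot (nhds 0)

def Lp0 (p : ℝ) (f : ℝ → ℂ) : Prop :=
  (∃ C : ℝ, ∀ t ≤ (0:ℝ), ‖f t‖ ≤ C) ∧ (∫⁻ t in Set.Ioi (0:ℝ), (‖f t‖₊ : ℝ≥0∞) ^ p) < ⊤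

def LpR (p : ℝ) (f : ℝ → ℂ) : Prop := (∫⁻ t : ℝ, (‖f t‖₊ : ℝ≥0∞) ^ p) < ⊤

def AAP (f : ℝ → ℂ) : Prop :=
  BCb f ∧ ∃ φ g : ℝ → ℂ, (∀ t, f t = φ t + g t) ∧ AP φ ∧ Tendsto g atTop (nhds 0)

def AAP0 (f : ℝ → ℂ) : Prop :=
  BCb f ∧ ∃ φ g : ℝ → ℂ, (∀ t, f t = φ t + g t) ∧ AP φ ∧
    Tendsto g atTop (nhds 0) ∧ Tendsto g atBot (nhds 0)

def APp (p : ℝ) (f : ℝ → ℂ) : Prop :=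
  BCb f ∧ ∃ φ g : ℝ → ℂ, (∀ t, f t = φ t + g t) ∧ AP φ ∧ Lp0 p g

def APp0 (p : ℝ) (f : ℝ → ℂ) : Prop :=
  BCb f ∧ ∃ φ g : ℝ → ℂ, (∀ t, f t = φ t + g t) ∧ AP φ ∧ LpR p g

/-- The Green kernel `g_ω`. -/
def gker (ω : ℂ) (t s : ℝ) : ℂ :=
  if Real.sign ω.re * (t - s) < 0
  then ((-Real.sign ω.re : ℝ) : ℂ) * Complex.exp (ω * ((t - s : ℝ) : ℂ)) else 0

/-- The Green operator `G_ω`. -/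
def Gop (ω : ℂ) (f : ℝ → ℂ) (t : ℝ) : ℂ := ∫ s : ℝ, gker ω t s * f s

/-- The absolute Green operator `I_ω`, with values in `[0,∞]`. -/
def Iop (ω : ℂ) (f : ℝ → ℂ) (t : ℝ) : ℝ≥0∞ := ∫⁻ s : ℝ, (‖gker ω t s * f s‖₊ : ℝ≥0∞)

def Gam {m : ℕ} (γ : Fin m → ℂ) (j : Fin m) : ℂ := ∏ k ∈ Finset.univ.erase j, (γ j - γ k)

/-- The Green operator for the family γ. -/
def GreenOp {m : ℕ} (γ : Fin m → ℂ) (f : ℝ → ℂ) (t : ℝ) : ℂ :=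
  ∑ j, (Gam γ j)⁻¹ * Gop (γ j) f t

def Dpoly {m : ℕ} (γ : Fin m → ℂ) : Polynomial ℂ := ∏ j, (Polynomial.X - Polynomial.C (γ j))

/-- The differential operator with characteristic polynomial `∏ (x - γ j)`. -/
def Dop {m : ℕ} (γ : Fin m → ℂ) (z : ℝ → ℂ) (t : ℝ) : ℂ :=
  ∑ k ∈ Finset.range (m + 1), (Dpoly γ).coeff k * iteratedDeriv k z t

def APm (m : ℕ) (F : ℝ → (Fin m → ℂ) → ℂ) : Prop :=
  Continuous (fun p : ℝ × (Fin m → ℂ) => F p.1 p.2) ∧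
  ∀ b : ℕ → ℝ, ∃ φ : ℕ → ℕ, StrictMono φ ∧ ∃ G : ℝ → (Fin m → ℂ) → ℂ,
    ∀ K : Set (Fin m → ℂ), IsCompact K →
      TendstoUniformlyOn (fun k (p : ℝ × (Fin m → ℂ)) => F (p.1 + b (φ k)) p.2)
        (fun p => G p.1 p.2) atTop (Set.univ ×ˢ K)

def DecayTop (m : ℕ) (h : ℝ → (Fin m → ℂ) → ℂ) : Prop :=
  ∀ K : Set (Fin m → ℂ), IsCompact K →
    TendstoUniformlyOn (fun t x => h t x) 0 atTop K

def DecayBot (m : ℕ) (h : ℝ → (Fin m → ℂ) → ℂ) : Prop :=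
  ∀ K : Set (Fin m → ℂ), IsCompact K →
    TendstoUniformlyOn (fun t x => h t x) 0 atBot K

def AAPm (m : ℕ) (F : ℝ → (Fin m → ℂ) → ℂ) : Prop :=
  Continuous (fun p : ℝ × (Fin m → ℂ) => F p.1 p.2) ∧ (∃ C : ℝ, ∀ t x, ‖F t x‖ ≤ C) ∧
  ∃ Φ h : ℝ → (Fin m → ℂ) → ℂ, (∀ t x, F t x = Φ t x + h t x) ∧ APm m Φ ∧ DecayTop m h

def AAP0m (m : ℕ) (F : ℝ → (Fin m → ℂ) → ℂ) : Prop :=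
  Continuous (fun p : ℝ × (Fin m → ℂ) => F p.1 p.2) ∧ (∃ C : ℝ, ∀ t x, ‖F t x‖ ≤ C) ∧
  ∃ Φ h : ℝ → (Fin m → ℂ) → ℂ, (∀ t x, F t x = Φ t x + h t x) ∧ APm m Φ ∧
    DecayTop m h ∧ DecayBot m h

/-- Complete Bell polynomials. -/
def Bell : ℕ → (ℕ → ℂ) → ℂ
  | 0, _ => 1
  | (i+1), x => ∑ j ∈ Finset.range (i+1), (Nat.choose i j : ℂ) * Bell (i - j) x * x (j+1)
decreasing_by exact Nat.lt_succ_of_le (Nat.sub_le i j)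

/-- `f_i(x_1,…,x_i) = B_{i+1}(x_1,…,x_i,0)`. -/
def fBell (i : ℕ) (x : ℕ → ℂ) : ℂ := Bell (i+1) (fun k => if k = i+1 then 0 else x k)

def Pa (n : ℕ) (a : ℕ → ℂ) : Polynomial ℂ :=
  Polynomial.X ^ n + ∑ i ∈ Finset.range n, Polynomial.C (a i) * Polynomial.X ^ i

def Prl (n : ℕ) (r : ℕ → ℝ → ℂ) (lam : ℂ) (t : ℝ) : ℂ :=
  ∑ k ∈ Finset.range n, lam ^ k * r k t

/-- `(d^k/dλ^k) P(r(t);λ)`. -/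
def PrlD (n k : ℕ) (r : ℕ → ℝ → ℂ) (lam : ℂ) (t : ℝ) : ℂ :=
  (Nat.factorial k : ℂ) * ∑ i ∈ Finset.range n, (Nat.choose i k : ℂ) * lam ^ (i - k) * r i t

def DopP (n : ℕ) (a : ℕ → ℂ) (lam : ℂ) (z : ℝ → ℂ) (t : ℝ) : ℂ :=
  ∑ j ∈ Finset.Icc 1 n, ((Nat.factorial j : ℂ))⁻¹ *
    Polynomial.eval lam (Polynomial.derivative^[j] (Pa n a)) * iteratedDeriv (j-1) z t

def Lterm (n : ℕ) (r : ℕ → ℝ → ℂ) (lam : ℂ) (z : ℝ → ℂ) (t : ℝ) : ℂ :=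
  ∑ k ∈ Finset.Icc 1 (n-1), ((Nat.factorial k : ℂ))⁻¹ * PrlD n k r lam t * iteratedDeriv (k-1) z t

def Fterm (n : ℕ) (a : ℕ → ℂ) (r : ℕ → ℝ → ℂ) (lam : ℂ) (z : ℝ → ℂ) (t : ℝ) : ℂ :=
  ∑ i ∈ Finset.Icc 2 n, ∑ j ∈ Finset.range (n - i + 1),
    (Nat.choose (i+j) j : ℂ) * (a (i+j) + r (i+j) t) * lam ^ j *
      fBell (i-1) (fun k => iteratedDeriv (k-1) z t)

def aT (n : ℕ) {m : ℕ} (γ : Fin m → ℂ) (j : Fin m) : ℝ :=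
  ∑ i ∈ Finset.range (n-1), ‖γ j‖ ^ i

def Lconst (n : ℕ) (γ : Fin (n-1) → ℂ) (r : ℕ → ℝ → ℂ) (lam : ℂ) (β : ℝ) : ℝ≥0∞ :=
  ∑ j, ∑ k ∈ Finset.Icc 1 (n-1),
    ENNReal.ofReal (aT n γ j / (‖Gam γ j‖ * (Nat.factorial k))) *
      ⨆ t : ℝ, Iop (((γ j).re - Real.sign (γ j).re * β : ℝ) : ℂ) (PrlD n k r lam) t

def Qconst (n : ℕ) (γ : Fin (n-1) → ℂ) (a : ℕ → ℂ) (r : ℕ → ℝ → ℂ) (lam : ℂ) (β : ℝ) : ℝ≥0∞ :=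
  ∑ j, ∑ i ∈ Finset.Icc 2 n, ∑ k ∈ Finset.range (i-1),
    ENNReal.ofReal (aT n γ j / ‖Gam γ j‖ * (Nat.choose i k) * ‖lam‖ ^ k) *
      (ENNReal.ofReal (‖a i‖ / |(γ j).re - Real.sign (γ j).re * β|) +
        ⨆ t : ℝ, Iop (((γ j).re - Real.sign (γ j).re * β : ℝ) : ℂ) (r i) t)

def mConst (n : ℕ) (δ : ℝ) : ℝ :=
  sSup { q : ℝ | ∃ i ∈ Finset.Icc 1 (n-1), ∃ X Y : ℕ → ℂ,
    (∑ k ∈ Finset.Icc 1 i, ‖X k‖) ≤ δ ∧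
    (∑ k ∈ Finset.Icc 1 i, ‖Y k‖) ≤ δ ∧
    (∑ k ∈ Finset.Icc 1 i, ‖X k - Y k‖) ≠ 0 ∧
    q = ‖fBell i X - fBell i Y‖ / ∑ k ∈ Finset.Icc 1 i, ‖X k - Y k‖ }


lemma ap_shift (f : ℝ → ℂ) (hf : AP f) {ε : ℝ} (hε : 0 < ε) :
    ∃ τ : ℕ → ℝ, (∀ m : ℕ, (m : ℝ) ≤ τ m) ∧
      (∀ m m' : ℕ, m ≤ m' → τ m + ((m' - m : ℕ) : ℝ) ≤ τ m') ∧
      (∀ m s, dist (f (s + τ m)) (f s) < ε) := by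
  obtain ⟨φ, hφ, g, hg⟩ := hf.2 (fun k => (k : ℝ))
  rw [Metric.tendstoUniformly_iff] at hg
  obtain ⟨N, hN⟩ := Filter.eventually_atTop.mp (hg (ε/2) (by positivity))
  have hadd : ∀ a b : ℕ, φ a + b ≤ φ (a + b) := by
    intro a b
    induction b with
    | zero => simp
    | succ b ih =>
        have h2 : φ (a + b) < φ (a + (b + 1)) := hφ (by omega)
        omega
  refine ⟨fun m => (φ (N + m) : ℝ) - (φ N : ℝ), ?_, ?_, ?_⟩
  · intro m
    have h := hadd N m
    have h2 : ((φ N + m : ℕ) : ℝ) ≤ (φ (N + m) : ℕ) := Nat.cast_le.mpr h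
    push_cast at h2
    show (m : ℝ) ≤ (φ (N + m) : ℝ) - (φ N : ℝ)
    linarith
  · intro m m' hmm
    have h := hadd (N + m) (m' - m)
    rw [show N + m + (m' - m) = N + m' by omega] at h
    have h2 : ((φ (N + m) + (m' - m) : ℕ) : ℝ) ≤ (φ (N + m') : ℕ) := Nat.cast_le.mpr h
    push_cast at h2 ⊢
    linarith
  · intro m s
    have h1 := hN (N + m) (Nat.le_add_right N m) (s - (φ N : ℝ))
    have h2 := hN N le_rfl (s - (φ N : ℝ))
    have e1 : s - (φ N : ℝ) + (φ (N + m) : ℝ) = s + ((φ (N + m) : ℝ) - (φ N : ℝ)) := by ring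
    have e2 : s - (φ N : ℝ) + (φ N : ℝ) = s := by ring
    rw [e1] at h1
    rw [e2] at h2
    calc dist (f (s + ((φ (N + m) : ℝ) - (φ N : ℝ)))) (f s)
        ≤ dist (f (s + ((φ (N + m) : ℝ) - (φ N : ℝ)))) (g (s - (φ N : ℝ)))
          + dist (g (s - (φ N : ℝ))) (f s) := dist_triangle _ _ _
      _ < ε/2 + ε/2 := by
          rw [dist_comm (f (s + ((φ (N + m) : ℝ) - (φ N : ℝ))))]
          exact add_lt_add h1 h2
      _ = ε := by ring

/-- If `f` is almost periodic and converges at `+∞`, it is constant;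
if `|f|^p` is integrable on `[0,∞)` for some `p ≥ 1`, then `f ≡ 0`. -/
theorem stmt0 (p : ℝ) (hp : 1 ≤ p) (f : ℝ → ℂ) (hf : AP f) :
    (∀ c : ℂ, Tendsto f atTop (nhds c) → ∀ t, f t = c) ∧
    ((∫⁻ t in Set.Ioi (0:ℝ), (‖f t‖₊ : ℝ≥0∞) ^ p) < ⊤ → ∀ t, f t = 0) := by
  constructor
  · intro c hc t0
    refine eq_of_forall_dist_le fun ε hε => ?_
    obtain ⟨τ, hτ1, hτ2, hτ3⟩ := ap_shift f hf hε
    have hτtop : Tendsto (fun m : ℕ => t0 + τ m) atTop atTop := by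
      refine tendsto_atTop_mono (fun m => ?_)
        (tendsto_atTop_add_const_left _ t0 tendsto_natCast_atTop_atTop)
      linarith [hτ1 m]
    have hlim : Tendsto (fun m => f (t0 + τ m)) atTop (nhds c) := hc.comp hτtop
    have hdistlim : Tendsto (fun m => dist (f (t0 + τ m)) (f t0)) atTop
        (nhds (dist c (f t0))) := hlim.dist tendsto_const_nhds
    have hle : dist c (f t0) ≤ ε :=
      le_of_tendsto hdistlim (Filter.Eventually.of_forall fun m => (hτ3 m t0).le)
    rwa [dist_comm] at hle
  · intro hint t0
    by_contra h0
    set δ := ‖f t0‖ with hδdef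
    have hδ : 0 < δ := norm_pos_iff.mpr h0
    obtain ⟨η0, hη0, hball⟩ :=
      Metric.continuousAt_iff.mp (hf.1.continuousAt (x := t0)) (δ/4) (by positivity)
    set η := min η0 (1/4 : ℝ) with hηdef
    have hηpos : 0 < η := lt_min hη0 (by norm_num)
    have hηle : η ≤ 1/4 := min_le_right _ _
    have hlow : ∀ s, dist s t0 < η → δ/2 ≤ ‖f s‖ := by
      intro s hs
      have h1 := hball (lt_of_lt_of_le hs (min_le_left _ _))
      rw [dist_eq_norm] at h1
      have h2 : ‖f t0‖ - ‖f s‖ ≤ ‖f s - f t0‖ := by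
        rw [norm_sub_rev]; exact norm_sub_norm_le _ _
      linarith
    obtain ⟨τ, hτ1, hτ2, hτ3⟩ := ap_shift f hf (show (0:ℝ) < δ/4 by positivity)
    set m0 := ⌈-t0⌉₊ + 1 with hm0
    have hm0t : -t0 + 1 ≤ (m0 : ℝ) := by
      have := Nat.le_ceil (-t0)
      rw [hm0]
      push_cast
      linarith
    set S : ℕ → Set ℝ := fun m => Set.Ioo (t0 + τ (m0 + m) - η) (t0 + τ (m0 + m) + η)
      with hSdef
    have hcen : ∀ m : ℕ, (1:ℝ) - η ≤ t0 + τ (m0 + m) - η := by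
      intro m
      have h1 := hτ1 (m0 + m)
      have h2 : (m0 : ℝ) ≤ ((m0 + m : ℕ) : ℝ) := by push_cast; linarith [Nat.cast_nonneg (α := ℝ) m]
      linarith
    have hsub : (⋃ m, S m) ⊆ Set.Ioi (0:ℝ) := by
      intro x hx
      obtain ⟨m, hm⟩ := Set.mem_iUnion.mp hx
      have := hm.1
      have := hcen m
      simp only [Set.mem_Ioi]
      linarith
    have hSlow : ∀ m, ∀ s ∈ S m, δ/4 ≤ ‖f s‖ := by
      intro m s hs
      set t := s - τ (m0 + m) with htdef
      have hst : s = t + τ (m0 + m) := by rw [htdef]; ring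
      have htd : dist t t0 < η := by
        rw [Real.dist_eq, abs_sub_lt_iff]
        constructor <;> [skip; skip] <;>
          · have h1 := hs.1; have h2 := hs.2; rw [htdef]; linarith
      have hft : δ/2 ≤ ‖f t‖ := hlow t htd
      have hsh := hτ3 (m0 + m) t
      rw [dist_eq_norm] at hsh
      have h2 : ‖f t‖ - ‖f (t + τ (m0 + m))‖ ≤ ‖f (t + τ (m0 + m)) - f t‖ := by
        rw [norm_sub_rev]; exact norm_sub_norm_le _ _
      rw [hst]
      linarith
    have hdisj : ∀ m m' : ℕ, m < m' → Disjoint (S m) (S m') := by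
      intro m m' hmm
      have hgap : τ (m0 + m) + 1 ≤ τ (m0 + m') := by
        have h := hτ2 (m0 + m) (m0 + m') (by omega)
        have h1 : (1:ℝ) ≤ (((m0 + m') - (m0 + m) : ℕ) : ℝ) := by
          exact_mod_cast Nat.one_le_iff_ne_zero.mpr (by omega)
        linarith
      rw [Set.disjoint_left]
      intro x hx hx'
      have h1 := hx.2
      have h2 := hx'.1
      linarith
    have hdisjP : Pairwise (Function.onFun Disjoint S) := by
      intro m m' hne
      rcases hne.lt_or_gt with h | h
      · exact hdisj _ _ h
      · exact (hdisj _ _ h).symm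
    have hmeas : Measurable fun s => (‖f s‖₊ : ℝ≥0∞) ^ p := by
      have := hf.1.measurable
      fun_prop
    set c : ℝ≥0∞ := ENNReal.ofReal (δ/4) ^ p * ENNReal.ofReal (2*η) with hcdef
    have hc0 : c ≠ 0 := by
      apply mul_ne_zero
      · exact (ENNReal.rpow_pos (ENNReal.ofReal_pos.mpr (by positivity)) ENNReal.ofReal_ne_top).ne'
      · exact (ENNReal.ofReal_pos.mpr (by positivity)).ne'
    have h3 : ∀ m, c ≤ ∫⁻ t in S m, (‖f t‖₊ : ℝ≥0∞) ^ p := by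
      intro m
      have hvol : volume (S m) = ENNReal.ofReal (2*η) := by
        rw [hSdef]
        simp only
        rw [Real.volume_Ioo]
        congr 1
        ring
      have hpt : ∀ t ∈ S m, ENNReal.ofReal (δ/4) ^ p ≤ (‖f t‖₊ : ℝ≥0∞) ^ p := by
        intro t ht
        refine ENNReal.rpow_le_rpow ?_ (by linarith : (0:ℝ) ≤ p)
        rw [← enorm_eq_nnnorm, ← ofReal_norm]
        exact ENNReal.ofReal_le_ofReal (hSlow m t ht)
      calc c = ENNReal.ofReal (δ/4) ^ p * volume (S m) := by rw [hvol]
        _ = ∫⁻ _ in S m, ENNReal.ofReal (δ/4) ^ p := (setLIntegral_const _ _).symm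
        _ ≤ ∫⁻ t in S m, (‖f t‖₊ : ℝ≥0∞) ^ p := setLIntegral_mono hmeas hpt
    have htop : (∫⁻ t in Set.Ioi (0:ℝ), (‖f t‖₊ : ℝ≥0∞) ^ p) = ⊤ := by
      refine top_le_iff.mp ?_
      calc (⊤ : ℝ≥0∞) = ∑' _ : ℕ, c := (ENNReal.tsum_const_eq_top_of_ne_zero hc0).symm
        _ ≤ ∑' m, ∫⁻ t in S m, (‖f t‖₊ : ℝ≥0∞) ^ p := ENNReal.tsum_le_tsum h3
        _ = ∫⁻ t in ⋃ m, S m, (‖f t‖₊ : ℝ≥0∞) ^ p :=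
            (lintegral_iUnion (fun m => measurableSet_Ioo) hdisjP _).symm
        _ ≤ ∫⁻ t in Set.Ioi (0:ℝ), (‖f t‖₊ : ℝ≥0∞) ^ p := lintegral_mono_set hsub
    exact absurd htop hint.ne

end
end

section
/- Let α be a nonzero real number, let 0 < β < |α|, and let a, b : ℝ → ℂ be locally integrable. Then for every t ∈ ℝ: (i) I_α[a · I_{sgn(α)β}[b]](t) ≤ I_{sgn(α)β}[b](t) · I_{α − sgn(α)β}[a](t); (ii) I_α[a](t) ≤ I_{sgn(α)β}[a](t); (iii) I_α[a · (I_β + I_{−β})[b]](t) ≤ 2 (I_β + I_{−β})[b](t) · I_{α − sgn(α)β}[a](t). -/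
open MeasureTheory Filter Topology
open scoped ENNReal NNReal

noncomputable section

/-- `I_ω` applied to a nonnegative (extended-real-valued) weight times `|a|`. -/
def IopE (ω : ℂ) (f : ℝ → ℝ≥0∞) (t : ℝ) : ℝ≥0∞ := ∫⁻ s : ℝ, (‖gker ω t s‖₊ : ℝ≥0∞) * f s

/-- Norm of the Green kernel for a real nonzero frequency. -/
lemma gker_norm (ω : ℝ) (hω : ω ≠ 0) (t s : ℝ) :
    (‖gker (ω : ℂ) t s‖₊ : ℝ≥0∞) =
      if Real.sign ω * (t - s) < 0 then ENNReal.ofReal (Real.exp (ω * (t - s))) else 0 := by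
  have habs : |Real.sign ω| = 1 := by
    rcases hω.lt_or_gt with h | h
    · simp [Real.sign_of_neg h]
    · simp [Real.sign_of_pos h]
  simp only [gker, Complex.ofReal_re]
  split_ifs with h
  · rw [← enorm_eq_nnnorm, ← ofReal_norm, norm_mul, Complex.norm_real, Real.norm_eq_abs, abs_neg,
      habs, one_mul, Complex.norm_exp, ← Complex.ofReal_mul,
      Complex.ofReal_re]
  · simp

lemma gker_meas (ω : ℂ) (t : ℝ) : Measurable fun s => (‖gker ω t s‖₊ : ℝ≥0∞) := by
  refine (Measurable.nnnorm ?_).coe_nnreal_ennreal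
  unfold gker
  exact Measurable.ite
    (measurableSet_lt (measurable_const.mul (measurable_const.sub measurable_id))
      measurable_const)
    (Continuous.measurable (by continuity)) measurable_const

lemma gker_le (ω ν : ℝ) (hω : ω ≠ 0) (hν : ν ≠ 0) (hs : Real.sign ω = Real.sign ν)
    (h : |ν| ≤ |ω|) (t s : ℝ) :
    (‖gker (ω : ℂ) t s‖₊ : ℝ≥0∞) ≤ (‖gker (ν : ℂ) t s‖₊ : ℝ≥0∞) := by
  rw [gker_norm ω hω, gker_norm ν hν, ← hs]
  split_ifs with hc
  · refine ENNReal.ofReal_le_ofReal (Real.exp_le_exp.2 ?_)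
    rcases hω.lt_or_gt with h1 | h1 <;> rcases hν.lt_or_gt with h2 | h2
    · rw [Real.sign_of_neg h1] at hc
      rw [abs_of_neg h1, abs_of_neg h2] at h
      nlinarith
    · rw [Real.sign_of_neg h1, Real.sign_of_pos h2] at hs; norm_num at hs
    · rw [Real.sign_of_pos h1, Real.sign_of_neg h2] at hs; norm_num at hs
    · rw [Real.sign_of_pos h1] at hc
      rw [abs_of_pos h1, abs_of_pos h2] at h
      nlinarith
  · exact le_refl 0

lemma gker_factor (α ν : ℝ) (hα : α ≠ 0) (hαν : α - ν ≠ 0)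
    (hs : Real.sign (α - ν) = Real.sign α) (t s : ℝ) :
    (‖gker ((α - ν : ℝ) : ℂ) t s‖₊ : ℝ≥0∞) =
      (‖gker (α : ℂ) t s‖₊ : ℝ≥0∞) * ENNReal.ofReal (Real.exp (ν * (s - t))) := by
  rw [gker_norm _ hαν, gker_norm _ hα, hs]
  split_ifs with hc
  · rw [← ENNReal.ofReal_mul (Real.exp_nonneg _), ← Real.exp_add]
    congr 2
    ring
  · simp

lemma gker_shift (ν : ℝ) (hν : ν ≠ 0) {t s : ℝ} (h : Real.sign ν * (t - s) < 0) (u : ℝ) :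
    (‖gker (ν : ℂ) s u‖₊ : ℝ≥0∞) ≤
      ENNReal.ofReal (Real.exp (ν * (s - t))) * (‖gker (ν : ℂ) t u‖₊ : ℝ≥0∞) := by
  rw [gker_norm _ hν, gker_norm _ hν]
  split_ifs with h1 h2
  · rw [← ENNReal.ofReal_mul (Real.exp_nonneg _), ← Real.exp_add]
    exact ENNReal.ofReal_le_ofReal (Real.exp_le_exp.2 (le_of_eq (by ring)))
  · exfalso
    have : Real.sign ν * (t - u) = Real.sign ν * (t - s) + Real.sign ν * (s - u) := by ring
    rw [this] at h2
    push_neg at h2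
    linarith
  · simp
  · simp

lemma gker_shift_neg (ν : ℝ) (hν : ν ≠ 0) {t s : ℝ} (h : Real.sign ν * (t - s) < 0)
    (u : ℝ) (hu : u ≠ t) :
    (‖gker ((-ν : ℝ) : ℂ) s u‖₊ : ℝ≥0∞) ≤
      ENNReal.ofReal (Real.exp (ν * (s - t))) *
        ((‖gker ((-ν : ℝ) : ℂ) t u‖₊ : ℝ≥0∞) + (‖gker (ν : ℂ) t u‖₊ : ℝ≥0∞)) := by
  have hν' : (-ν : ℝ) ≠ 0 := neg_ne_zero.2 hν
  rw [gker_norm (-ν) hν' s u, gker_norm (-ν) hν' t u, gker_norm ν hν t u, Real.sign_neg]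
  by_cases h1 : -Real.sign ν * (s - u) < 0
  · rw [if_pos h1]
    rcases hν.lt_or_gt with hn | hp
    · -- ν < 0, sign ν = -1
      rw [Real.sign_of_neg hn] at h h1 ⊢
      by_cases h2 : (-1 : ℝ) * (t - u) < 0
      · rw [if_pos h2]
        calc ENNReal.ofReal (Real.exp (-ν * (s - u)))
            ≤ ENNReal.ofReal (Real.exp (ν * (s - t))) *
                ENNReal.ofReal (Real.exp (ν * (t - u))) := by
              rw [← ENNReal.ofReal_mul (Real.exp_nonneg _), ← Real.exp_add]
              exact ENNReal.ofReal_le_ofReal (Real.exp_le_exp.2 (by nlinarith))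
          _ ≤ _ := by
              rw [mul_add]
              exact le_add_of_nonneg_left (zero_le)
      · have h2' : -(-1 : ℝ) * (t - u) < 0 := by
          push_neg at h2
          rcases lt_or_eq_of_le h2 with h3 | h3
          · linarith
          · exact absurd (by linarith : u = t) hu
        rw [if_pos h2']
        calc ENNReal.ofReal (Real.exp (-ν * (s - u)))
            ≤ ENNReal.ofReal (Real.exp (ν * (s - t))) *
                ENNReal.ofReal (Real.exp (-ν * (t - u))) := by
              rw [← ENNReal.ofReal_mul (Real.exp_nonneg _), ← Real.exp_add]
              exact ENNReal.ofReal_le_ofReal (Real.exp_le_exp.2 (by nlinarith))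
          _ ≤ _ := by
              rw [mul_add]
              exact le_add_of_nonneg_right (zero_le)
    · -- 0 < ν, sign ν = 1
      rw [Real.sign_of_pos hp] at h h1 ⊢
      by_cases h2 : (1 : ℝ) * (t - u) < 0
      · rw [if_pos h2]
        calc ENNReal.ofReal (Real.exp (-ν * (s - u)))
            ≤ ENNReal.ofReal (Real.exp (ν * (s - t))) *
                ENNReal.ofReal (Real.exp (ν * (t - u))) := by
              rw [← ENNReal.ofReal_mul (Real.exp_nonneg _), ← Real.exp_add]
              exact ENNReal.ofReal_le_ofReal (Real.exp_le_exp.2 (by nlinarith))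
          _ ≤ _ := by
              rw [mul_add]
              exact le_add_of_nonneg_left (zero_le)
      · have h2' : -(1 : ℝ) * (t - u) < 0 := by
          push_neg at h2
          rcases lt_or_eq_of_le h2 with h3 | h3
          · linarith
          · exact absurd (by linarith : u = t) hu
        rw [if_pos h2']
        calc ENNReal.ofReal (Real.exp (-ν * (s - u)))
            ≤ ENNReal.ofReal (Real.exp (ν * (s - t))) *
                ENNReal.ofReal (Real.exp (-ν * (t - u))) := by
              rw [← ENNReal.ofReal_mul (Real.exp_nonneg _), ← Real.exp_add]
              exact ENNReal.ofReal_le_ofReal (Real.exp_le_exp.2 (by nlinarith))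
          _ ≤ _ := by
              rw [mul_add]
              exact le_add_of_nonneg_right (zero_le)
  · rw [if_neg h1]
    exact zero_le

lemma Iop_eq (ω : ℂ) (f : ℝ → ℂ) (t : ℝ) :
    Iop ω f t = ∫⁻ s : ℝ, (‖gker ω t s‖₊ : ℝ≥0∞) * (‖f s‖₊ : ℝ≥0∞) := by
  simp [Iop, nnnorm_mul, ENNReal.coe_mul]

lemma Iop_shift (ν : ℝ) (hν : ν ≠ 0) (b : ℝ → ℂ) {t s : ℝ}
    (h : Real.sign ν * (t - s) < 0) :
    Iop (ν : ℂ) b s ≤ ENNReal.ofReal (Real.exp (ν * (s - t))) * Iop (ν : ℂ) b t := by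
  rw [Iop_eq, Iop_eq, ← lintegral_const_mul' _ _ ENNReal.ofReal_ne_top]
  refine lintegral_mono fun u => ?_
  rw [← mul_assoc]
  exact mul_le_mul_left (gker_shift ν hν h u) _

lemma Iop_shift_neg (ν : ℝ) (hν : ν ≠ 0) (b : ℝ → ℂ)
    (hb : LocallyIntegrable b volume) {t s : ℝ}
    (h : Real.sign ν * (t - s) < 0) :
    Iop ((-ν : ℝ) : ℂ) b s ≤ ENNReal.ofReal (Real.exp (ν * (s - t))) *
      (Iop ((-ν : ℝ) : ℂ) b t + Iop (ν : ℂ) b t) := by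
  have hmeas : AEMeasurable
      (fun u => (‖gker ((-ν : ℝ) : ℂ) t u‖₊ : ℝ≥0∞) * (‖b u‖₊ : ℝ≥0∞)) volume :=
    (gker_meas _ t).aemeasurable.mul hb.aestronglyMeasurable.aemeasurable.nnnorm.coe_nnreal_ennreal
  have h0 : ∀ᵐ (u : ℝ), u ≠ t := by
    rw [ae_iff]
    simp only [ne_eq, not_not, Set.setOf_eq_eq_singleton]
    exact measure_singleton t
  calc Iop ((-ν : ℝ) : ℂ) b s
      = ∫⁻ u : ℝ, (‖gker ((-ν : ℝ) : ℂ) s u‖₊ : ℝ≥0∞) * (‖b u‖₊ : ℝ≥0∞) := Iop_eq _ _ _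
    _ ≤ ∫⁻ u : ℝ, ENNReal.ofReal (Real.exp (ν * (s - t))) *
          (((‖gker ((-ν : ℝ) : ℂ) t u‖₊ : ℝ≥0∞) + (‖gker (ν : ℂ) t u‖₊ : ℝ≥0∞)) *
            (‖b u‖₊ : ℝ≥0∞)) := by
        refine lintegral_mono_ae ?_
        filter_upwards [h0] with u hu
        rw [← mul_assoc]
        exact mul_le_mul_left (gker_shift_neg ν hν h u hu) _
    _ = ENNReal.ofReal (Real.exp (ν * (s - t))) *
          ∫⁻ u : ℝ, ((‖gker ((-ν : ℝ) : ℂ) t u‖₊ : ℝ≥0∞) + (‖gker (ν : ℂ) t u‖₊ : ℝ≥0∞)) *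
            (‖b u‖₊ : ℝ≥0∞) := lintegral_const_mul' _ _ ENNReal.ofReal_ne_top
    _ = ENNReal.ofReal (Real.exp (ν * (s - t))) *
          (Iop ((-ν : ℝ) : ℂ) b t + Iop (ν : ℂ) b t) := by
        congr 1
        simp only [add_mul]
        rw [lintegral_add_left' hmeas, Iop_eq, Iop_eq]

lemma IopE_bound (α ν : ℝ) (hα : α ≠ 0) (hαν : α - ν ≠ 0)
    (hs : Real.sign (α - ν) = Real.sign α)
    (a : ℝ → ℂ) (ha : LocallyIntegrable a volume) (t : ℝ)
    (w : ℝ → ℝ≥0∞) (W : ℝ≥0∞)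
    (hw : ∀ s, Real.sign α * (t - s) < 0 →
      w s ≤ ENNReal.ofReal (Real.exp (ν * (s - t))) * W) :
    IopE (α : ℂ) (fun s => (‖a s‖₊ : ℝ≥0∞) * w s) t ≤ W * Iop ((α - ν : ℝ) : ℂ) a t := by
  have hmeas : AEMeasurable
      (fun s => (‖gker ((α - ν : ℝ) : ℂ) t s‖₊ : ℝ≥0∞) * (‖a s‖₊ : ℝ≥0∞)) volume :=
    (gker_meas _ t).aemeasurable.mul ha.aestronglyMeasurable.aemeasurable.nnnorm.coe_nnreal_ennreal
  calc IopE (α : ℂ) (fun s => (‖a s‖₊ : ℝ≥0∞) * w s) t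
      = ∫⁻ s : ℝ, (‖gker (α : ℂ) t s‖₊ : ℝ≥0∞) * ((‖a s‖₊ : ℝ≥0∞) * w s) := rfl
    _ ≤ ∫⁻ s : ℝ, ((‖gker ((α - ν : ℝ) : ℂ) t s‖₊ : ℝ≥0∞) * (‖a s‖₊ : ℝ≥0∞)) * W := by
        refine lintegral_mono fun s => ?_
        by_cases hc : Real.sign α * (t - s) < 0
        · calc (‖gker (α : ℂ) t s‖₊ : ℝ≥0∞) * ((‖a s‖₊ : ℝ≥0∞) * w s)
              ≤ (‖gker (α : ℂ) t s‖₊ : ℝ≥0∞) *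
                  ((‖a s‖₊ : ℝ≥0∞) * (ENNReal.ofReal (Real.exp (ν * (s - t))) * W)) := by
                gcongr
                exact hw s hc
            _ = (((‖gker (α : ℂ) t s‖₊ : ℝ≥0∞) *
                  ENNReal.ofReal (Real.exp (ν * (s - t)))) * (‖a s‖₊ : ℝ≥0∞)) * W := by ring
            _ = ((‖gker ((α - ν : ℝ) : ℂ) t s‖₊ : ℝ≥0∞) * (‖a s‖₊ : ℝ≥0∞)) * W := by
                rw [gker_factor α ν hα hαν hs]
        · have hz : (‖gker (α : ℂ) t s‖₊ : ℝ≥0∞) = 0 := by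
            rw [gker_norm _ hα, if_neg hc]
          rw [hz, zero_mul]
          exact zero_le
    _ = (∫⁻ s : ℝ, (‖gker ((α - ν : ℝ) : ℂ) t s‖₊ : ℝ≥0∞) * (‖a s‖₊ : ℝ≥0∞)) * W :=
        lintegral_mul_const'' W hmeas
    _ = W * Iop ((α - ν : ℝ) : ℂ) a t := by rw [mul_comm, Iop_eq]

/-- The three basic inequalities for the operators `I_ω`. -/
theorem stmt1 (α β : ℝ) (hα : α ≠ 0) (hβ0 : 0 < β) (hβ : β < |α|)
    (a b : ℝ → ℂ) (ha : LocallyIntegrable a volume) (hb : LocallyIntegrable b volume)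
    (t : ℝ) :
    IopE ((α : ℝ) : ℂ) (fun s => (‖a s‖₊ : ℝ≥0∞) * Iop ((Real.sign α * β : ℝ) : ℂ) b s) t ≤
      Iop ((Real.sign α * β : ℝ) : ℂ) b t * Iop ((α - Real.sign α * β : ℝ) : ℂ) a t ∧
    Iop ((α : ℝ) : ℂ) a t ≤ Iop ((Real.sign α * β : ℝ) : ℂ) a t ∧
    IopE ((α : ℝ) : ℂ)
        (fun s => (‖a s‖₊ : ℝ≥0∞) * (Iop ((β : ℝ) : ℂ) b s + Iop ((-β : ℝ) : ℂ) b s)) t ≤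
      2 * (Iop ((β : ℝ) : ℂ) b t + Iop ((-β : ℝ) : ℂ) b t) *
        Iop ((α - Real.sign α * β : ℝ) : ℂ) a t := by
  have hβ' : β ≠ 0 := ne_of_gt hβ0
  rcases hα.lt_or_gt with hneg | hpos
  · -- α < 0, ν = -β
    rw [abs_of_neg hneg] at hβ
    have hσ : Real.sign α = -1 := Real.sign_of_neg hneg
    simp only [hσ, neg_one_mul]
    have hν : (-β : ℝ) ≠ 0 := neg_ne_zero.2 hβ'
    have hαν : α - -β ≠ 0 := ne_of_lt (by linarith)
    have hs : Real.sign (α - -β) = Real.sign α :=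
      (Real.sign_of_neg (by linarith)).trans hσ.symm
    have hσν : Real.sign (-β : ℝ) = -1 := Real.sign_of_neg (by linarith)
    refine ⟨?_, ?_, ?_⟩
    · refine IopE_bound α (-β) hα hαν hs a ha t _ _ (fun s hc => ?_)
      exact Iop_shift (-β) hν b (by rw [hσν]; rwa [hσ] at hc)
    · rw [Iop_eq, Iop_eq]
      refine lintegral_mono fun s => ?_
      refine mul_le_mul_left (gker_le α (-β) hα hν (by rw [hσ, hσν]) ?_ t s) _
      rw [abs_of_neg hneg, abs_of_neg (by linarith : (-β : ℝ) < 0)]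
      linarith
    · refine IopE_bound α (-β) hα hαν hs a ha t _ _ (fun s hc => ?_)
      have hc' : Real.sign (-β : ℝ) * (t - s) < 0 := by rw [hσν]; rwa [hσ] at hc
      have h1 : Iop ((-β : ℝ) : ℂ) b s ≤
          ENNReal.ofReal (Real.exp (-β * (s - t))) * Iop ((-β : ℝ) : ℂ) b t :=
        Iop_shift (-β) hν b hc'
      have h2 : Iop ((β : ℝ) : ℂ) b s ≤ ENNReal.ofReal (Real.exp (-β * (s - t))) *
          (Iop ((β : ℝ) : ℂ) b t + Iop ((-β : ℝ) : ℂ) b t) := by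
        have := Iop_shift_neg (-β) hν b hb hc'
        simpa [neg_neg] using this
      calc Iop ((β : ℝ) : ℂ) b s + Iop ((-β : ℝ) : ℂ) b s
          ≤ ENNReal.ofReal (Real.exp (-β * (s - t))) *
              (Iop ((β : ℝ) : ℂ) b t + Iop ((-β : ℝ) : ℂ) b t) +
            ENNReal.ofReal (Real.exp (-β * (s - t))) * Iop ((-β : ℝ) : ℂ) b t :=
            add_le_add h2 h1
        _ ≤ ENNReal.ofReal (Real.exp (-β * (s - t))) *
              (2 * (Iop ((β : ℝ) : ℂ) b t + Iop ((-β : ℝ) : ℂ) b t)) := by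
            rw [← mul_add]
            gcongr
            rw [two_mul]
            gcongr
            exact le_add_of_nonneg_left (zero_le)
  · -- α > 0, ν = β
    rw [abs_of_pos hpos] at hβ
    have hσ : Real.sign α = 1 := Real.sign_of_pos hpos
    simp only [hσ, one_mul]
    have hαν : α - β ≠ 0 := ne_of_gt (by linarith)
    have hs : Real.sign (α - β) = Real.sign α :=
      (Real.sign_of_pos (by linarith)).trans hσ.symm
    have hσν : Real.sign β = 1 := Real.sign_of_pos hβ0
    refine ⟨?_, ?_, ?_⟩
    · refine IopE_bound α β hα hαν hs a ha t _ _ (fun s hc => ?_)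
      exact Iop_shift β hβ' b (by rw [hσν]; rwa [hσ] at hc)
    · rw [Iop_eq, Iop_eq]
      refine lintegral_mono fun s => ?_
      refine mul_le_mul_left (gker_le α β hα hβ' (by rw [hσ, hσν]) ?_ t s) _
      rw [abs_of_pos hpos, abs_of_pos hβ0]
      linarith
    · refine IopE_bound α β hα hαν hs a ha t _ _ (fun s hc => ?_)
      have hc' : Real.sign β * (t - s) < 0 := by rw [hσν]; rwa [hσ] at hc
      have h1 : Iop ((β : ℝ) : ℂ) b s ≤
          ENNReal.ofReal (Real.exp (β * (s - t))) * Iop ((β : ℝ) : ℂ) b t :=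
        Iop_shift β hβ' b hc'
      have h2 : Iop ((-β : ℝ) : ℂ) b s ≤ ENNReal.ofReal (Real.exp (β * (s - t))) *
          (Iop ((-β : ℝ) : ℂ) b t + Iop ((β : ℝ) : ℂ) b t) :=
        Iop_shift_neg β hβ' b hb hc'
      calc Iop ((β : ℝ) : ℂ) b s + Iop ((-β : ℝ) : ℂ) b s
          ≤ ENNReal.ofReal (Real.exp (β * (s - t))) * Iop ((β : ℝ) : ℂ) b t +
            ENNReal.ofReal (Real.exp (β * (s - t))) *
              (Iop ((-β : ℝ) : ℂ) b t + Iop ((β : ℝ) : ℂ) b t) :=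
            add_le_add h1 h2
        _ ≤ ENNReal.ofReal (Real.exp (β * (s - t))) *
              (2 * (Iop ((β : ℝ) : ℂ) b t + Iop ((-β : ℝ) : ℂ) b t)) := by
            rw [← mul_add]
            gcongr
            rw [two_mul]
            have key : ∀ x y : ℝ≥0∞, x + (y + x) ≤ (x + y) + (x + y) := fun x y =>
              calc x + (y + x) = (x + y) + x := by ring
                _ ≤ (x + y) + (x + y) := add_le_add_right (self_le_add_right x y) _
            exact key _ _

end
end

section
/- Let γ ∈ ℂ with α := Re γ ≠ 0, let p ≥ 1, and let r : ℝ → ℂ be bounded and continuous. Then: (i) if r ∈ BC_0 then I_α[r] ∈ BC_0; (ii) if r ∈ C_00 then I_α[r] ∈ C_00; (iii) if r ∈ L^p_0 then I_α[r] ∈ BC_0 ∩ L^p_0; (iv) if r ∈ L^p(ℝ) then I_α[r] ∈ C_00 ∩ L^p(ℝ); (v) if r ∈ L^p(−∞,0] then I_α[r](t) → 0 as t → −∞ and I_α[r] ∈ L^p(−∞,0]. -/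
open MeasureTheory Filter Topology
open scoped ENNReal NNReal

noncomputable section

namespace Stmt2Aux
open Set

def Kk (β u : ℝ) : ℝ≥0∞ := ENNReal.ofReal (Real.exp (-β * |u|))

lemma Kk_meas (β : ℝ) : Measurable (Kk β) :=
  ((Real.continuous_exp.comp (continuous_const.mul continuous_abs)).measurable).ennreal_ofReal

lemma Kk_meas_sub (β t : ℝ) : Measurable (fun s => Kk β (t - s)) :=
  (Kk_meas β).comp (measurable_const.sub measurable_id)

lemma Kk_meas_sub' (β s : ℝ) : Measurable (fun t => Kk β (t - s)) :=
  (Kk_meas β).comp (measurable_id.sub measurable_const)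

lemma Kk_ne_top {β u : ℝ} : Kk β u ≠ ⊤ := ENNReal.ofReal_ne_top

lemma Kk_ne_zero {β u : ℝ} : Kk β u ≠ 0 :=
  (ENNReal.ofReal_pos.2 (Real.exp_pos _)).ne'

lemma Kk_le_one {β : ℝ} (hβ : 0 ≤ β) (u : ℝ) : Kk β u ≤ 1 := by
  rw [Kk, ← ENNReal.ofReal_one]
  refine ENNReal.ofReal_le_ofReal ?_
  rw [← Real.exp_zero]
  exact Real.exp_le_exp.2 (by nlinarith [abs_nonneg u])

lemma Kk_even {β u : ℝ} : Kk β (-u) = Kk β u := by simp [Kk]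

lemma Kk_sub_comm {β t s : ℝ} : Kk β (t - s) = Kk β (s - t) := by
  rw [← Kk_even, neg_sub]

def Mm (β : ℝ) : ℝ≥0∞ := ∫⁻ u, Kk β u

lemma lintegral_comp_neg (f : ℝ → ℝ≥0∞) (hf : Measurable f) :
    ∫⁻ x, f (-x) = ∫⁻ x, f x :=
  (Measure.measurePreserving_neg (volume : Measure ℝ)).lintegral_comp hf

lemma setLIntegral_neg {f : ℝ → ℝ≥0∞} (hf : Measurable f) {s : Set ℝ}
    (hs : MeasurableSet s) : ∫⁻ x in -s, f x = ∫⁻ x in s, f (-x) := by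
  rw [← lintegral_indicator hs.neg, ← lintegral_indicator hs,
    ← lintegral_comp_neg (fun x => (-s).indicator f x) (hf.indicator hs.neg)]
  refine lintegral_congr fun x => ?_
  by_cases hx : x ∈ s
  · rw [Set.indicator_of_mem hx, Set.indicator_of_mem (by simpa using hx)]
  · rw [Set.indicator_of_notMem hx, Set.indicator_of_notMem (by simpa using hx)]

lemma lintegral_Ioi_Kk {β : ℝ} (hβ : 0 < β) : ∫⁻ u in Ioi (0:ℝ), Kk β u < ⊤ := by
  have h1 : ∫⁻ u in Ioi (0:ℝ), Kk β u
      = ∫⁻ u in Ioi (0:ℝ), (‖Real.exp (-β * u)‖₊ : ℝ≥0∞) := by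
    refine setLIntegral_congr_fun measurableSet_Ioi (fun u hu => ?_)
    rw [Kk, abs_of_pos hu]; exact (Real.enorm_eq_ofReal (Real.exp_pos _).le).symm
  rw [h1]
  exact (exp_neg_integrableOn_Ioi 0 hβ).2

lemma Mm_lt_top {β : ℝ} (hβ : 0 < β) : Mm β < ⊤ := by
  have hIic : ∫⁻ u in Iic (0:ℝ), Kk β u = ∫⁻ u in Ici (0:ℝ), Kk β u := by
    have := setLIntegral_neg (Kk_meas β) (measurableSet_Ici (a := (0:ℝ)))
    simp only [neg_Ici, neg_zero] at this
    rw [this]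
    exact lintegral_congr fun u => Kk_even
  have hIci : ∫⁻ u in Ici (0:ℝ), Kk β u = ∫⁻ u in Ioi (0:ℝ), Kk β u := by
    rw [Measure.restrict_congr_set Ioi_ae_eq_Ici.symm]
  rw [Mm, ← lintegral_add_compl (Kk β) (measurableSet_Iic (a := (0:ℝ))), compl_Iic]
  rw [hIic, hIci]
  exact ENNReal.add_lt_top.2 ⟨lintegral_Ioi_Kk hβ, lintegral_Ioi_Kk hβ⟩

lemma Mm_pos (β : ℝ) : 0 < Mm β := by
  have h1 : ENNReal.ofReal (Real.exp (-|β|)) * volume (Ioc (0:ℝ) 1)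
      ≤ ∫⁻ u in Ioc (0:ℝ) 1, Kk β u := by
    rw [← setLIntegral_const]
    refine setLIntegral_mono (Kk_meas β) fun u hu => ?_
    refine ENNReal.ofReal_le_ofReal (Real.exp_le_exp.2 ?_)
    have h2 : |u| ≤ 1 := by rw [abs_of_pos hu.1]; exact hu.2
    nlinarith [abs_nonneg u, le_abs_self β, abs_nonneg β]
  have h3 : (0:ℝ≥0∞) < ENNReal.ofReal (Real.exp (-|β|)) * volume (Ioc (0:ℝ) 1) := by
    rw [Real.volume_Ioc]
    simp [ENNReal.ofReal_pos, Real.exp_pos]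
  exact h3.trans_le (h1.trans (setLIntegral_le_lintegral _ _))

lemma lintegral_Kk_sub_right (β s : ℝ) : ∫⁻ t, Kk β (t - s) = Mm β := by
  simp only [sub_eq_add_neg]
  exact lintegral_add_right_eq_self (Kk β) (-s)

lemma lintegral_Kk_sub_left (β t : ℝ) : ∫⁻ s, Kk β (t - s) = Mm β := by
  have : ∀ s : ℝ, Kk β (t - s) = Kk β (s - t) := fun s => Kk_sub_comm
  simp only [this]
  exact lintegral_Kk_sub_right β t

def Jj (β : ℝ) (f : ℝ → ℝ≥0∞) (t : ℝ) : ℝ≥0∞ := ∫⁻ s, Kk β (t - s) * f s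

lemma Jj_meas {β : ℝ} {f : ℝ → ℝ≥0∞} (hf : Measurable f) : Measurable (Jj β f) := by
  apply Measurable.lintegral_prod_right (f := fun t s => Kk β (t - s) * f s)
  exact ((Kk_meas β).comp (measurable_fst.sub measurable_snd)).mul (hf.comp measurable_snd)

lemma Jj_le_const {β : ℝ} {f : ℝ → ℝ≥0∞} {C : ℝ≥0∞} (hfC : ∀ s, f s ≤ C) (t : ℝ) :
    Jj β f t ≤ C * Mm β := by
  calc Jj β f t ≤ ∫⁻ s, Kk β (t - s) * C :=
        lintegral_mono fun s => mul_le_mul_right (hfC s) _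
    _ = (∫⁻ s, Kk β (t - s)) * C := lintegral_mul_const _ (Kk_meas_sub β t)
    _ = C * Mm β := by rw [lintegral_Kk_sub_left, mul_comm]

lemma Jj_neg {β : ℝ} {f : ℝ → ℝ≥0∞} (hf : Measurable f) (t : ℝ) :
    Jj β f (-t) = Jj β (fun s => f (-s)) t := by
  have h := lintegral_comp_neg (fun s => Kk β (-t - s) * f s)
    (((Kk_meas β).comp (measurable_const.sub measurable_id)).mul hf)
  rw [Jj, ← h]
  refine lintegral_congr fun s => ?_
  show Kk β (-t - -s) * f (-s) = Kk β (t - s) * f (-s)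
  rw [show (-t - -s : ℝ) = -(t - s) by ring, Kk_even]

lemma tendsto_Kk_atTop {β : ℝ} (hβ : 0 < β) (s : ℝ) :
    Tendsto (fun t => Kk β (t - s)) atTop (𝓝 0) := by
  have h1 : Tendsto (fun t : ℝ => |t - s|) atTop atTop :=
    tendsto_abs_atTop_atTop.comp (tendsto_atTop_add_const_right _ (-s)
      (by simpa [sub_eq_add_neg, Function.id_def] using tendsto_id (α := ℝ)))
  have h2 : Tendsto (fun t : ℝ => -β * |t - s|) atTop atBot := by
    have := (h1.const_mul_atTop hβ)
    have h3 : Tendsto (fun t : ℝ => -(β * |t - s|)) atTop atBot :=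
      tendsto_neg_atTop_atBot.comp this
    simpa [neg_mul] using h3
  have h4 : Tendsto (fun t : ℝ => Real.exp (-β * |t - s|)) atTop (𝓝 0) :=
    Real.tendsto_exp_atBot.comp h2
  simpa [Kk] using ENNReal.tendsto_ofReal h4

lemma tendsto_tail {β : ℝ} (hβ : 0 < β) (T : ℝ) :
    Tendsto (fun t => ∫⁻ s in Iic T, Kk β (t - s)) atTop (𝓝 0) := by
  have h := tendsto_lintegral_filter_of_dominated_convergence
    (μ := volume.restrict (Iic T)) (l := atTop)
    (F := fun t s => Kk β (t - s)) (f := fun _ => 0)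
    (fun s => Kk β (T + 1 - s))
    (Eventually.of_forall fun t => Kk_meas_sub β t)
    ?_ ?_ (ae_of_all _ fun s => tendsto_Kk_atTop hβ s)
  · simpa using h
  · filter_upwards [eventually_ge_atTop (T + 1)] with t ht
    refine (ae_restrict_iff' measurableSet_Iic).2 (ae_of_all _ fun s hs => ?_)
    refine ENNReal.ofReal_le_ofReal (Real.exp_le_exp.2 ?_)
    have hs' : s ≤ T := hs
    rw [abs_of_nonneg (by linarith : (0:ℝ) ≤ t - s), abs_of_nonneg (by linarith : (0:ℝ) ≤ T + 1 - s)]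
    nlinarith
  · refine ne_of_lt (lt_of_le_of_lt (setLIntegral_le_lintegral _ _) ?_)
    rw [lintegral_Kk_sub_left]
    exact Mm_lt_top hβ

lemma tendsto_conv_zero {β : ℝ} (hβ : 0 < β) {g : ℝ → ℝ≥0∞} (hg : Measurable g)
    (hgt : ∀ s, g s ≠ ⊤) (hfin : ∫⁻ s, g s ≠ ⊤) :
    Tendsto (fun t => ∫⁻ s, Kk β (t - s) * g s) atTop (𝓝 0) := by
  have h := tendsto_lintegral_filter_of_dominated_convergence
    (μ := (volume : Measure ℝ)) (l := atTop)
    (F := fun t s => Kk β (t - s) * g s) (f := fun _ => 0) g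
    (Eventually.of_forall fun t => (Kk_meas_sub β t).mul hg)
    (Eventually.of_forall fun t => ae_of_all _ fun s => by
      calc Kk β (t - s) * g s ≤ 1 * g s := mul_le_mul_left (Kk_le_one hβ.le _) _
        _ = g s := one_mul _)
    hfin
    (ae_of_all _ fun s => by
      have := ENNReal.Tendsto.mul_const (tendsto_Kk_atTop hβ s) (b := g s) (Or.inr (hgt s))
      simpa using this)
  simpa using h

lemma Jj_holder {β p : ℝ} (hp : 1 ≤ p) {f : ℝ → ℝ≥0∞} (hf : Measurable f) (t : ℝ) :
    Jj β f t ≤ (Mm β) ^ (1 - 1/p) * (∫⁻ s, Kk β (t - s) * f s ^ p) ^ (1/p) := by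
  rcases eq_or_lt_of_le hp with h1 | h1
  · rw [← h1]
    simp [Jj, ENNReal.rpow_one]
  · have hp0 : p ≠ 0 := by positivity
    set q := p / (p - 1) with hq
    have hconj : p.HolderConjugate q := by
      rw [hq]; exact Real.HolderConjugate.conjExponent h1
    have h2 := ENNReal.lintegral_mul_le_Lp_mul_Lq (volume : Measure ℝ) hconj
      (f := fun s => Kk β (t - s) ^ (1/p) * f s)
      (g := fun s => Kk β (t - s) ^ (1/q))
      (((Kk_meas_sub β t).pow_const _).mul hf).aemeasurable
      ((Kk_meas_sub β t).pow_const _).aemeasurable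
    have e1 : ∀ s, (fun s => Kk β (t - s) ^ (1/p) * f s) s * (fun s => Kk β (t - s) ^ (1/q)) s
        = Kk β (t - s) * f s := by
      intro s
      have : Kk β (t - s) ^ (1/p) * f s * Kk β (t - s) ^ (1/q)
          = (Kk β (t - s) ^ (1/p) * Kk β (t - s) ^ (1/q)) * f s := by ring
      rw [this, ← ENNReal.rpow_add _ _ Kk_ne_zero Kk_ne_top,
        show 1/p + 1/q = 1 by rw [one_div, one_div]; exact hconj.inv_add_inv_eq_one,
        ENNReal.rpow_one]
    have e2 : ∀ s, ((fun s => Kk β (t - s) ^ (1/p) * f s) s) ^ p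
        = Kk β (t - s) * f s ^ p := by
      intro s
      rw [ENNReal.mul_rpow_of_nonneg _ _ (by positivity : (0:ℝ) ≤ p),
        ← ENNReal.rpow_mul, one_div_mul_cancel hp0, ENNReal.rpow_one]
    have e3 : ∀ s, ((fun s => Kk β (t - s) ^ (1/q)) s) ^ q = Kk β (t - s) := by
      intro s
      rw [← ENNReal.rpow_mul, one_div_mul_cancel hconj.symm.pos.ne', ENNReal.rpow_one]
    simp only [Pi.mul_apply] at h2
    calc Jj β f t = ∫⁻ s, Kk β (t - s) * f s := rfl
      _ ≤ (∫⁻ s, (Kk β (t - s) ^ (1/p) * f s) ^ p) ^ (1/p)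
          * (∫⁻ s, (Kk β (t - s) ^ (1/q)) ^ q) ^ (1/q) := by
          rw [← lintegral_congr e1] at *
          exact h2
      _ = (∫⁻ s, Kk β (t - s) * f s ^ p) ^ (1/p) * (Mm β) ^ (1/q) := by
          rw [lintegral_congr e2, lintegral_congr e3, lintegral_Kk_sub_left]
      _ = (Mm β) ^ (1 - 1/p) * (∫⁻ s, Kk β (t - s) * f s ^ p) ^ (1/p) := by
          rw [mul_comm, show (1 - 1/p : ℝ) = 1/q by rw [one_div, one_div]; exact hconj.one_sub_inv]

lemma Jj_young {β p : ℝ} (hβ : 0 < β) (hp : 1 ≤ p) {f : ℝ → ℝ≥0∞}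
    (hf : Measurable f) (hft : ∀ s, f s ≠ ⊤) :
    ∫⁻ t, (Jj β f t) ^ p ≤ (Mm β) ^ ((1 - 1/p) * p) * Mm β * ∫⁻ s, f s ^ p := by
  have hp0 : p ≠ 0 := by positivity
  have hMtop : Mm β ≠ ⊤ := (Mm_lt_top hβ).ne
  have hexp : (0:ℝ) ≤ (1 - 1/p) * p := by
    have : 1/p ≤ 1 := by
      rw [div_le_one (by positivity)]; exact hp
    nlinarith
  have hcMtop : (Mm β) ^ ((1 - 1/p) * p) ≠ ⊤ := ENNReal.rpow_ne_top_of_nonneg hexp hMtop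
  calc ∫⁻ t, (Jj β f t) ^ p
      ≤ ∫⁻ t, ((Mm β) ^ (1 - 1/p) * (∫⁻ s, Kk β (t - s) * f s ^ p) ^ (1/p)) ^ p :=
        lintegral_mono fun t => ENNReal.rpow_le_rpow (Jj_holder hp hf t) (by positivity)
    _ = ∫⁻ t, (Mm β) ^ ((1 - 1/p) * p) * (∫⁻ s, Kk β (t - s) * f s ^ p) := by
        refine lintegral_congr fun t => ?_
        rw [ENNReal.mul_rpow_of_nonneg _ _ (by positivity : (0:ℝ) ≤ p),
          ← ENNReal.rpow_mul, ← ENNReal.rpow_mul, one_div_mul_cancel hp0, ENNReal.rpow_one]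
    _ = (Mm β) ^ ((1 - 1/p) * p) * ∫⁻ t, ∫⁻ s, Kk β (t - s) * f s ^ p :=
        lintegral_const_mul' _ _ hcMtop
    _ = (Mm β) ^ ((1 - 1/p) * p) * ∫⁻ s, ∫⁻ t, Kk β (t - s) * f s ^ p := by
        rw [lintegral_lintegral_swap]
        exact (((Kk_meas β).comp (measurable_fst.sub measurable_snd)).mul
          ((hf.comp measurable_snd).pow_const _)).aemeasurable
    _ = (Mm β) ^ ((1 - 1/p) * p) * ∫⁻ s, Mm β * f s ^ p := by
        refine congrArg _ (lintegral_congr fun s => ?_)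
        rw [lintegral_mul_const _ (Kk_meas_sub' β s), lintegral_Kk_sub_right, mul_comm]
    _ = (Mm β) ^ ((1 - 1/p) * p) * Mm β * ∫⁻ s, f s ^ p := by
        rw [lintegral_const_mul' _ _ hMtop, mul_assoc]

lemma rpow_tendsto_zero {c : ℝ} (hc : 0 < c) {l : Filter ℝ} {u : ℝ → ℝ≥0∞}
    (hu : Tendsto u l (𝓝 0)) : Tendsto (fun x => u x ^ c) l (𝓝 0) := by
  rw [ENNReal.tendsto_nhds_zero] at hu ⊢
  intro ε hε
  filter_upwards [hu (ε ^ (1/c)) (ENNReal.rpow_pos_of_nonneg hε (by positivity))] with x hx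
  calc u x ^ c ≤ (ε ^ (1/c)) ^ c := ENNReal.rpow_le_rpow hx hc.le
    _ = ε := by rw [← ENNReal.rpow_mul, one_div_mul_cancel hc.ne', ENNReal.rpow_one]

lemma add_rpow_le {p : ℝ} (hp : 1 ≤ p) (a b : ℝ≥0∞) :
    (a + b) ^ p ≤ 2 ^ p * (a ^ p + b ^ p) := by
  have hp0 : (0:ℝ) ≤ p := by positivity
  calc (a + b) ^ p ≤ (2 * max a b) ^ p := by
        refine ENNReal.rpow_le_rpow ?_ hp0
        rw [two_mul]
        exact add_le_add (le_max_left _ _) (le_max_right _ _)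
    _ = 2 ^ p * (max a b) ^ p := ENNReal.mul_rpow_of_nonneg _ _ hp0
    _ ≤ 2 ^ p * (a ^ p + b ^ p) := by
        refine mul_le_mul_right ?_ _
        rcases max_cases a b with ⟨h1, _⟩ | ⟨h1, _⟩ <;> rw [h1]
        · exact le_add_right le_rfl
        · exact le_add_left le_rfl

lemma Kk_tail {β : ℝ} (hβ : 0 < β) {t : ℝ} (ht : 0 ≤ t) :
    ∫⁻ s in Iic (0:ℝ), Kk β (t - s)
      ≤ ENNReal.ofReal (Real.exp (-(β/2) * t)) * Mm (β/2) := by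
  have h1 : ∫⁻ s in Iic (0:ℝ), Kk β (t - s)
      ≤ ∫⁻ s in Iic (0:ℝ), ENNReal.ofReal (Real.exp (-(β/2) * t)) * Kk (β/2) (t - s) := by
    refine setLIntegral_mono (measurable_const.mul (Kk_meas_sub (β/2) t)) fun s hs => ?_
    have hs' : s ≤ 0 := hs
    rw [Kk, Kk, ← ENNReal.ofReal_mul (Real.exp_pos _).le, ← Real.exp_add]
    refine ENNReal.ofReal_le_ofReal (Real.exp_le_exp.2 ?_)
    rw [abs_of_nonneg (by linarith : (0:ℝ) ≤ t - s)]
    nlinarith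
  refine h1.trans ?_
  rw [lintegral_const_mul' _ _ ENNReal.ofReal_ne_top]
  refine mul_le_mul_right ?_ _
  refine (setLIntegral_le_lintegral _ _).trans ?_
  rw [lintegral_Kk_sub_left]

lemma split_bound {β : ℝ} {f : ℝ → ℝ≥0∞} {C : ℝ≥0∞} (hf : Measurable f)
    (hfC : ∀ s, f s ≤ C) (t : ℝ) :
    Jj β f t ≤ C * (∫⁻ s in Iic (0:ℝ), Kk β (t - s)) + Jj β ((Ioi (0:ℝ)).indicator f) t := by
  have hdec : ∀ s, f s = (Iic (0:ℝ)).indicator f s + (Ioi (0:ℝ)).indicator f s := by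
    intro s
    rcases le_or_gt s 0 with h | h
    · rw [Set.indicator_of_mem (by exact h) f, Set.indicator_of_notMem (by simpa using h) f,
        add_zero]
    · rw [Set.indicator_of_notMem (by simpa using h) f, Set.indicator_of_mem (by exact h) f,
        zero_add]
  have h1 : Jj β f t = (∫⁻ s, Kk β (t - s) * (Iic (0:ℝ)).indicator f s)
      + Jj β ((Ioi (0:ℝ)).indicator f) t := by
    simp only [Jj]
    rw [← lintegral_add_left (f := fun s => Kk β (t - s) * (Iic (0:ℝ)).indicator f s) ((Kk_meas_sub β t).mul (hf.indicator measurableSet_Iic))]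
    refine lintegral_congr fun s => ?_
    rw [← mul_add, ← hdec]
  rw [h1]
  refine add_le_add_left ?_ _
  have h2 : ∀ s, Kk β (t - s) * (Iic (0:ℝ)).indicator f s
      = (Iic (0:ℝ)).indicator (fun s => Kk β (t - s) * f s) s := by
    intro s
    by_cases hs : s ∈ Iic (0:ℝ)
    · rw [Set.indicator_of_mem hs, Set.indicator_of_mem hs]
    · rw [Set.indicator_of_notMem hs, Set.indicator_of_notMem hs, mul_zero]
  calc ∫⁻ s, Kk β (t - s) * (Iic (0:ℝ)).indicator f s
      = ∫⁻ s in Iic (0:ℝ), Kk β (t - s) * f s := by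
        rw [lintegral_congr h2, lintegral_indicator measurableSet_Iic]
    _ ≤ ∫⁻ s in Iic (0:ℝ), Kk β (t - s) * C :=
        setLIntegral_mono ((Kk_meas_sub β t).mul measurable_const)
          (fun s _ => mul_le_mul_right (hfC s) _)
    _ = (∫⁻ s in Iic (0:ℝ), Kk β (t - s)) * C := lintegral_mul_const _ (Kk_meas_sub β t)
    _ = C * ∫⁻ s in Iic (0:ℝ), Kk β (t - s) := mul_comm _ _

lemma indicator_rpow {p : ℝ} (hp : 0 < p) (f : ℝ → ℝ≥0∞) (s : Set ℝ) (x : ℝ) :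
    (s.indicator f x) ^ p = s.indicator (fun x => f x ^ p) x := by
  by_cases hx : x ∈ s
  · rw [Set.indicator_of_mem hx, Set.indicator_of_mem hx]
  · rw [Set.indicator_of_notMem hx, Set.indicator_of_notMem hx, ENNReal.zero_rpow_of_pos hp]

lemma D1 {β : ℝ} (hβ : 0 < β) {f : ℝ → ℝ≥0∞} {C : ℝ≥0∞} (hC : C ≠ ⊤)
    (hfC : ∀ s, f s ≤ C) (h0 : Tendsto f atTop (𝓝 0)) :
    Tendsto (Jj β f) atTop (𝓝 0) := by
  rw [ENNReal.tendsto_nhds_zero]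
  intro ε hε
  have hMtop : Mm β ≠ ⊤ := (Mm_lt_top hβ).ne
  have hε2 : (0:ℝ≥0∞) < ε / 2 / Mm β := by
    refine ENNReal.div_pos ?_ hMtop
    exact (ENNReal.half_pos hε.ne').ne'
  obtain ⟨T, hT⟩ := eventually_atTop.1 ((ENNReal.tendsto_nhds_zero.1 h0) _ hε2)
  have htailpos : (0:ℝ≥0∞) < ε / 2 / C := ENNReal.div_pos (ENNReal.half_pos hε.ne').ne' hC
  filter_upwards [(ENNReal.tendsto_nhds_zero.1 (tendsto_tail hβ T)) _ htailpos] with t ht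
  have hsplit : Jj β f t = (∫⁻ s in Iic T, Kk β (t - s) * f s)
      + ∫⁻ s in Ioi T, Kk β (t - s) * f s := by
    rw [Jj, ← lintegral_add_compl (fun s => Kk β (t - s) * f s) (measurableSet_Iic (a := T)),
      compl_Iic]
  have h1 : ∫⁻ s in Iic T, Kk β (t - s) * f s ≤ ε / 2 := by
    calc ∫⁻ s in Iic T, Kk β (t - s) * f s
        ≤ ∫⁻ s in Iic T, Kk β (t - s) * C :=
          setLIntegral_mono ((Kk_meas_sub β t).mul measurable_const)
            (fun s _ => mul_le_mul_right (hfC s) _)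
      _ = (∫⁻ s in Iic T, Kk β (t - s)) * C := lintegral_mul_const _ (Kk_meas_sub β t)
      _ ≤ (ε / 2 / C) * C := mul_le_mul_left ht _
      _ ≤ ε / 2 := by rw [mul_comm]; exact ENNReal.mul_div_le
  have h2 : ∫⁻ s in Ioi T, Kk β (t - s) * f s ≤ ε / 2 := by
    calc ∫⁻ s in Ioi T, Kk β (t - s) * f s
        ≤ ∫⁻ s in Ioi T, Kk β (t - s) * (ε / 2 / Mm β) :=
          setLIntegral_mono ((Kk_meas_sub β t).mul measurable_const)
            (fun s hs => mul_le_mul_right (hT s (le_of_lt hs)) _)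
      _ = (∫⁻ s in Ioi T, Kk β (t - s)) * (ε / 2 / Mm β) :=
          lintegral_mul_const _ (Kk_meas_sub β t)
      _ ≤ Mm β * (ε / 2 / Mm β) := by
          refine mul_le_mul_left ?_ _
          refine (setLIntegral_le_lintegral _ _).trans ?_
          rw [lintegral_Kk_sub_left]
      _ ≤ ε / 2 := ENNReal.mul_div_le
  calc Jj β f t = _ := hsplit
    _ ≤ ε / 2 + ε / 2 := add_le_add h1 h2
    _ = ε := ENNReal.add_halves ε

lemma D2 {β p : ℝ} (hβ : 0 < β) (hp : 1 ≤ p) {f : ℝ → ℝ≥0∞} {C : ℝ≥0∞}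
    (hf : Measurable f) (hC : C ≠ ⊤) (hfC : ∀ s, f s ≤ C) (hft : ∀ s, f s ≠ ⊤)
    (hLp : ∫⁻ s in Ioi (0:ℝ), f s ^ p ≠ ⊤) :
    Tendsto (Jj β f) atTop (𝓝 0) := by
  have hp0 : (0:ℝ) < p := by positivity
  set f2 := (Ioi (0:ℝ)).indicator f with hf2
  have hf2m : Measurable f2 := hf.indicator measurableSet_Ioi
  have hf2p : ∫⁻ s, f2 s ^ p = ∫⁻ s in Ioi (0:ℝ), f s ^ p := by
    rw [← lintegral_indicator measurableSet_Ioi]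
    exact lintegral_congr fun s => indicator_rpow hp0 f _ s
  have hterm1 : Tendsto (fun t => C * ∫⁻ s in Iic (0:ℝ), Kk β (t - s)) atTop (𝓝 0) := by
    have := ENNReal.Tendsto.const_mul (tendsto_tail hβ 0) (a := C) (Or.inr hC)
    simpa using this
  have hinner : Tendsto (fun t => ∫⁻ s, Kk β (t - s) * f2 s ^ p) atTop (𝓝 0) := by
    refine tendsto_conv_zero hβ (hf2m.pow_const _) (fun s => ?_) (by rw [hf2p]; exact hLp)
    exact ENNReal.rpow_ne_top_of_nonneg hp0.le (by
      by_cases hs : s ∈ Ioi (0:ℝ)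
      · rw [hf2, Set.indicator_of_mem hs]; exact hft s
      · rw [hf2, Set.indicator_of_notMem hs]; simp)
  have hterm2 : Tendsto (fun t => (Mm β) ^ (1 - 1/p)
      * (∫⁻ s, Kk β (t - s) * f2 s ^ p) ^ (1/p)) atTop (𝓝 0) := by
    have h := ENNReal.Tendsto.const_mul (rpow_tendsto_zero (c := 1/p) (by positivity) hinner)
      (a := (Mm β) ^ (1 - 1/p))
      (Or.inr (ENNReal.rpow_ne_top_of_nonneg (by
        have : 1/p ≤ 1 := by rw [div_le_one hp0]; exact hp
        linarith) (Mm_lt_top hβ).ne))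
    simpa only [mul_zero] using h
  have hsum := hterm1.add hterm2
  rw [add_zero] at hsum
  refine tendsto_of_tendsto_of_tendsto_of_le_of_le tendsto_const_nhds hsum
    (fun t => zero_le) (fun t => ?_)
  exact (split_bound hf hfC t).trans
    (add_le_add_right (Jj_holder hp hf2m t) _)

lemma Plem {β p : ℝ} (hβ : 0 < β) (hp : 1 ≤ p) {f : ℝ → ℝ≥0∞} {C : ℝ≥0∞}
    (hf : Measurable f) (hC : C ≠ ⊤) (hfC : ∀ s, f s ≤ C) (hft : ∀ s, f s ≠ ⊤)
    (hLp : ∫⁻ s in Ioi (0:ℝ), f s ^ p ≠ ⊤) :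
    ∫⁻ t in Ioi (0:ℝ), (Jj β f t) ^ p < ⊤ := by
  have hp0 : (0:ℝ) < p := by positivity
  set f2 := (Ioi (0:ℝ)).indicator f with hf2
  have hf2m : Measurable f2 := hf.indicator measurableSet_Ioi
  have hf2p : ∫⁻ s, f2 s ^ p = ∫⁻ s in Ioi (0:ℝ), f s ^ p := by
    rw [← lintegral_indicator measurableSet_Ioi]
    exact lintegral_congr fun s => indicator_rpow hp0 f _ s
  set T1 : ℝ → ℝ≥0∞ := fun t => C * ∫⁻ s in Iic (0:ℝ), Kk β (t - s) with hT1
  have hT1m : Measurable T1 := by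
    have : Measurable (fun t => ∫⁻ s, Kk β (t - s) * (Iic (0:ℝ)).indicator (fun _ => 1) s) := by
      apply Measurable.lintegral_prod_right
        (f := fun t s => Kk β (t - s) * (Iic (0:ℝ)).indicator (fun _ => 1) s)
      exact ((Kk_meas β).comp (measurable_fst.sub measurable_snd)).mul
        ((measurable_const.indicator measurableSet_Iic).comp measurable_snd)
    have heq : (fun t => ∫⁻ s, Kk β (t - s) * (Iic (0:ℝ)).indicator (fun _ => 1) s)
        = fun t => ∫⁻ s in Iic (0:ℝ), Kk β (t - s) := by
      refine funext fun t => ?_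
      rw [← lintegral_indicator measurableSet_Iic]
      refine lintegral_congr fun s => ?_
      by_cases hs : s ∈ Iic (0:ℝ)
      · rw [Set.indicator_of_mem hs, Set.indicator_of_mem hs, mul_one]
      · rw [Set.indicator_of_notMem hs, Set.indicator_of_notMem hs, mul_zero]
    rw [hT1]
    exact measurable_const.mul (heq ▸ this)
  have hbound : ∀ t, Jj β f t ≤ T1 t + Jj β f2 t := fun t => split_bound hf hfC t
  have hkey : ∫⁻ t in Ioi (0:ℝ), (Jj β f t) ^ p
      ≤ 2 ^ p * ((∫⁻ t in Ioi (0:ℝ), T1 t ^ p) + ∫⁻ t in Ioi (0:ℝ), (Jj β f2 t) ^ p) := by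
    calc ∫⁻ t in Ioi (0:ℝ), (Jj β f t) ^ p
        ≤ ∫⁻ t in Ioi (0:ℝ), 2 ^ p * (T1 t ^ p + Jj β f2 t ^ p) :=
          setLIntegral_mono (measurable_const.mul
            ((hT1m.pow_const _).add ((Jj_meas hf2m).pow_const _)))
            (fun t _ => ((ENNReal.rpow_le_rpow (hbound t) hp0.le).trans (add_rpow_le hp _ _)))
      _ = 2 ^ p * ((∫⁻ t in Ioi (0:ℝ), T1 t ^ p) + ∫⁻ t in Ioi (0:ℝ), (Jj β f2 t) ^ p) := by
          rw [lintegral_const_mul' _ _ (ENNReal.rpow_ne_top_of_nonneg hp0.le ENNReal.ofNat_ne_top),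
            lintegral_add_left (hT1m.pow_const _)]
  have hfin1 : ∫⁻ t in Ioi (0:ℝ), T1 t ^ p < ⊤ := by
    have hb : ∀ t ∈ Ioi (0:ℝ), T1 t ^ p
        ≤ (C * Mm (β/2)) ^ p * Kk (β * p / 2) t := by
      intro t ht
      have h1 : T1 t ≤ C * (ENNReal.ofReal (Real.exp (-(β/2) * t)) * Mm (β/2)) :=
        mul_le_mul_right (Kk_tail hβ (le_of_lt ht)) _
      calc T1 t ^ p ≤ (C * (ENNReal.ofReal (Real.exp (-(β/2) * t)) * Mm (β/2))) ^ p :=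
            ENNReal.rpow_le_rpow h1 hp0.le
        _ = (C * Mm (β/2)) ^ p * Kk (β * p / 2) t := by
            rw [show C * (ENNReal.ofReal (Real.exp (-(β/2) * t)) * Mm (β/2))
                = (C * Mm (β/2)) * ENNReal.ofReal (Real.exp (-(β/2) * t)) by ring,
              ENNReal.mul_rpow_of_nonneg _ _ hp0.le,
              ENNReal.ofReal_rpow_of_pos (Real.exp_pos _),
              ← Real.exp_mul, Kk]
            congr 3
            rw [abs_of_pos ht]
            ring
    calc ∫⁻ t in Ioi (0:ℝ), T1 t ^ p
        ≤ ∫⁻ t in Ioi (0:ℝ), (C * Mm (β/2)) ^ p * Kk (β * p / 2) t :=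
          setLIntegral_mono (measurable_const.mul (Kk_meas _)) hb
      _ = (C * Mm (β/2)) ^ p * ∫⁻ t in Ioi (0:ℝ), Kk (β * p / 2) t := by
          rw [lintegral_const_mul' _ _ (ENNReal.rpow_ne_top_of_nonneg hp0.le
            (ENNReal.mul_ne_top hC (Mm_lt_top (by positivity)).ne))]
      _ < ⊤ := ENNReal.mul_lt_top
          (ENNReal.rpow_lt_top_of_nonneg hp0.le
            (ENNReal.mul_ne_top hC (Mm_lt_top (by positivity)).ne))
          (lintegral_Ioi_Kk (by positivity))
  have hfin2 : ∫⁻ t in Ioi (0:ℝ), (Jj β f2 t) ^ p < ⊤ := by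
    refine lt_of_le_of_lt (setLIntegral_le_lintegral _ _) ?_
    refine lt_of_le_of_lt (Jj_young hβ hp hf2m (fun s => ?_)) ?_
    · by_cases hs : s ∈ Ioi (0:ℝ)
      · rw [hf2, Set.indicator_of_mem hs]; exact hft s
      · rw [hf2, Set.indicator_of_notMem hs]; simp
    · rw [hf2p]
      refine ENNReal.mul_lt_top (ENNReal.mul_ne_top ?_ (Mm_lt_top hβ).ne).lt_top
        hLp.lt_top
      refine ENNReal.rpow_ne_top_of_nonneg ?_ (Mm_lt_top hβ).ne
      have : 1/p ≤ 1 := by rw [div_le_one hp0]; exact hp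
      nlinarith
  refine lt_of_le_of_lt hkey ?_
  exact ENNReal.mul_lt_top (ENNReal.rpow_lt_top_of_nonneg hp0.le ENNReal.ofNat_ne_top)
    (ENNReal.add_lt_top.2 ⟨hfin1, hfin2⟩)

lemma cont_Ioi {g : ℝ → ℝ} (hg : Continuous g) (hg0 : ∀ s, 0 ≤ g s)
    (hfin : ∀ t, (∫⁻ s in Ioi t, ENNReal.ofReal (g s)) ≠ ⊤) :
    Continuous fun t => (∫⁻ s in Ioi t, ENNReal.ofReal (g s)).toReal := by
  have key : ∀ a b : ℝ, a ≤ b → (∫⁻ s in Ioi a, ENNReal.ofReal (g s)).toReal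
      = (∫⁻ s in Ioi b, ENNReal.ofReal (g s)).toReal + ∫ s in a..b, g s := by
    intro a b hab
    have hsplit : ∫⁻ s in Ioi a, ENNReal.ofReal (g s)
        = (∫⁻ s in Ioc a b, ENNReal.ofReal (g s)) + ∫⁻ s in Ioi b, ENNReal.ofReal (g s) := by
      rw [← lintegral_union measurableSet_Ioi (Ioc_disjoint_Ioi le_rfl),
        Ioc_union_Ioi_eq_Ioi hab]
    have h1 : (∫⁻ s in Ioc a b, ENNReal.ofReal (g s)) ≠ ⊤ := by
      refine ne_top_of_le_ne_top (hfin a) ?_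
      rw [hsplit]; exact le_self_add
    have h2 : (∫⁻ s in Ioc a b, ENNReal.ofReal (g s)).toReal = ∫ s in a..b, g s := by
      rw [intervalIntegral.integral_of_le hab,
        integral_eq_lintegral_of_nonneg_ae (ae_of_all _ fun s => hg0 s)
          hg.aestronglyMeasurable.restrict]
    rw [hsplit, ENNReal.toReal_add h1 (hfin b), h2]
    ring
  have repr : ∀ t, (∫⁻ s in Ioi t, ENNReal.ofReal (g s)).toReal
      = (∫⁻ s in Ioi (0:ℝ), ENNReal.ofReal (g s)).toReal - ∫ s in (0:ℝ)..t, g s := by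
    intro t
    rcases le_total t 0 with h | h
    · rw [key t 0 h, intervalIntegral.integral_symm]
      ring
    · have h2 := key 0 t h
      rw [h2]; ring
  have : (fun t => (∫⁻ s in Ioi t, ENNReal.ofReal (g s)).toReal)
      = fun t => (∫⁻ s in Ioi (0:ℝ), ENNReal.ofReal (g s)).toReal - ∫ s in (0:ℝ)..t, g s :=
    funext repr
  rw [this]
  exact continuous_const.sub
    (intervalIntegral.continuous_primitive (fun a b => hg.intervalIntegrable a b) 0)

lemma cont_Iio {g : ℝ → ℝ} (hg : Continuous g) (hg0 : ∀ s, 0 ≤ g s)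
    (hfin : ∀ t, (∫⁻ s in Iio t, ENNReal.ofReal (g s)) ≠ ⊤) :
    Continuous fun t => (∫⁻ s in Iio t, ENNReal.ofReal (g s)).toReal := by
  have key : ∀ a b : ℝ, a ≤ b → (∫⁻ s in Iio b, ENNReal.ofReal (g s)).toReal
      = (∫⁻ s in Iio a, ENNReal.ofReal (g s)).toReal + ∫ s in a..b, g s := by
    intro a b hab
    have hsplit : ∫⁻ s in Iio b, ENNReal.ofReal (g s)
        = (∫⁻ s in Iio a, ENNReal.ofReal (g s)) + ∫⁻ s in Ico a b, ENNReal.ofReal (g s) := by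
      rw [← lintegral_union measurableSet_Ico (by
        refine Set.disjoint_left.2 fun x hx hx2 => ?_
        exact absurd hx2.1 (not_le.2 hx)),
        Iio_union_Ico_eq_Iio hab]
    have h1 : (∫⁻ s in Ico a b, ENNReal.ofReal (g s)) ≠ ⊤ := by
      refine ne_top_of_le_ne_top (hfin b) ?_
      rw [hsplit]; exact le_add_self
    have h2 : (∫⁻ s in Ico a b, ENNReal.ofReal (g s)).toReal = ∫ s in a..b, g s := by
      rw [Measure.restrict_congr_set Ico_ae_eq_Ioc, intervalIntegral.integral_of_le hab,
        integral_eq_lintegral_of_nonneg_ae (ae_of_all _ fun s => hg0 s)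
          hg.aestronglyMeasurable.restrict]
    rw [hsplit, ENNReal.toReal_add (hfin a) h1, h2]
  have repr : ∀ t, (∫⁻ s in Iio t, ENNReal.ofReal (g s)).toReal
      = (∫⁻ s in Iio (0:ℝ), ENNReal.ofReal (g s)).toReal + ∫ s in (0:ℝ)..t, g s := by
    intro t
    rcases le_total t 0 with h | h
    · have h2 := key t 0 h
      rw [intervalIntegral.integral_symm 0 t] at h2
      linarith
    · exact key 0 t h
  have : (fun t => (∫⁻ s in Iio t, ENNReal.ofReal (g s)).toReal)
      = fun t => (∫⁻ s in Iio (0:ℝ), ENNReal.ofReal (g s)).toReal + ∫ s in (0:ℝ)..t, g s :=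
    funext repr
  rw [this]
  exact continuous_const.add
    (intervalIntegral.continuous_primitive (fun a b => hg.intervalIntegrable a b) 0)

end Stmt2Aux

namespace Stmt2Aux
open Set

lemma gker_norm_pos {γ : ℂ} (hpos : 0 < γ.re) (r : ℝ → ℂ) (t s : ℝ) :
    (‖gker γ t s * r s‖₊ : ℝ≥0∞)
      = (Ioi t).indicator (fun s => ENNReal.ofReal (Real.exp (γ.re * (t - s)) * ‖r s‖)) s := by
  simp only [gker, Real.sign_of_pos hpos]
  by_cases hs : s ∈ Ioi t
  · have hst : t < s := hs
    rw [if_pos (by nlinarith : (1:ℝ) * (t - s) < 0), Set.indicator_of_mem hs,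
      ← enorm_eq_nnnorm, ← ofReal_norm]
    congr 1
    have hre : (γ * ((t - s : ℝ) : ℂ)).re = γ.re * (t - s) := by
      simp [Complex.mul_re]
    rw [norm_mul, norm_mul, Complex.norm_exp, hre]
    norm_num [Complex.norm_real]
  · have hst : ¬ t < s := hs
    rw [if_neg (by push_neg at hst ⊢; nlinarith), Set.indicator_of_notMem hs]
    simp

lemma gker_norm_neg {γ : ℂ} (hneg : γ.re < 0) (r : ℝ → ℂ) (t s : ℝ) :
    (‖gker γ t s * r s‖₊ : ℝ≥0∞)
      = (Iio t).indicator (fun s => ENNReal.ofReal (Real.exp (γ.re * (t - s)) * ‖r s‖)) s := by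
  simp only [gker, Real.sign_of_neg hneg]
  by_cases hs : s ∈ Iio t
  · have hst : s < t := hs
    rw [if_pos (by nlinarith : (-1:ℝ) * (t - s) < 0), Set.indicator_of_mem hs,
      ← enorm_eq_nnnorm, ← ofReal_norm]
    congr 1
    have hre : (γ * ((t - s : ℝ) : ℂ)).re = γ.re * (t - s) := by
      simp [Complex.mul_re]
    rw [norm_mul, norm_mul, Complex.norm_exp, hre]
    norm_num [Complex.norm_real]
  · have hst : ¬ s < t := hs
    rw [if_neg (by push_neg at hst ⊢; nlinarith), Set.indicator_of_notMem hs]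
    simp

end Stmt2Aux

open Set Stmt2Aux

/-- Mapping properties of `I_α` (`α = Re γ ≠ 0`) on the spaces
`BC_0`, `C_00`, `L^p_0`, `L^p(ℝ)` and `L^p(-∞,0]`. -/
theorem stmt2 (γ : ℂ) (hγ : γ.re ≠ 0) (p : ℝ) (hp : 1 ≤ p)
    (r : ℝ → ℂ) (hr : BCb r) :
    (BC0 r → BC0 (fun t => (((Iop γ r t).toReal : ℝ) : ℂ))) ∧
    (C00 r → C00 (fun t => (((Iop γ r t).toReal : ℝ) : ℂ))) ∧
    (Lp0 p r → BC0 (fun t => (((Iop γ r t).toReal : ℝ) : ℂ)) ∧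
      Lp0 p (fun t => (((Iop γ r t).toReal : ℝ) : ℂ))) ∧
    (LpR p r → C00 (fun t => (((Iop γ r t).toReal : ℝ) : ℂ)) ∧
      LpR p (fun t => (((Iop γ r t).toReal : ℝ) : ℂ))) ∧
    ((∫⁻ s in Set.Iic (0:ℝ), (‖r s‖₊ : ℝ≥0∞) ^ p) < ⊤ →
      Tendsto (fun t => (Iop γ r t).toReal) atBot (nhds 0) ∧
      (∫⁻ s in Set.Iic (0:ℝ), (‖(Iop γ r s).toReal‖₊ : ℝ≥0∞) ^ p) < ⊤) := by
  obtain ⟨hrc, c, hc⟩ := hr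
  have hp0 : (0:ℝ) < p := by positivity
  set β := |γ.re| with hβdef
  have hβ : 0 < β := abs_pos.2 hγ
  set ρ : ℝ → ℝ≥0∞ := fun s => (‖r s‖₊ : ℝ≥0∞) with hρdef
  have hρm : Measurable ρ := hrc.measurable.nnnorm.coe_nnreal_ennreal
  have hρeq : ∀ s, ρ s = ENNReal.ofReal ‖r s‖ := fun s => (ofReal_norm _).symm
  set C : ℝ≥0∞ := ENNReal.ofReal c with hCdef
  have hC : C ≠ ⊤ := ENNReal.ofReal_ne_top
  have hρC : ∀ s, ρ s ≤ C := fun s => by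
    rw [hρeq]; exact ENNReal.ofReal_le_ofReal (hc s)
  have hρt : ∀ s, ρ s ≠ ⊤ := fun s => ENNReal.coe_ne_top
  -- sign-dependent facts
  have hsign : (∀ t, Iop γ r t ≤ Jj β ρ t) ∧ Continuous fun t => (Iop γ r t).toReal := by
    rcases lt_or_gt_of_ne hγ with hneg | hpos
    · have hβeq : β = -γ.re := abs_of_neg hneg
      have hIJ : ∀ t, Iop γ r t ≤ Jj β ρ t := by
        intro t
        refine lintegral_mono fun s => ?_
        rw [gker_norm_neg hneg]
        by_cases hs : s ∈ Set.Iio t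
        · have hst : s < t := hs
          rw [Set.indicator_of_mem hs, ENNReal.ofReal_mul (Real.exp_pos _).le]
          rw [← hρeq]
          refine mul_le_mul_left (le_of_eq ?_) _
          rw [Kk]
          congr 1
          rw [abs_of_pos (by linarith : (0:ℝ) < t - s)]
          rw [hβeq]; ring
        · rw [Set.indicator_of_notMem hs]; exact zero_le
      refine ⟨hIJ, ?_⟩
      have hfin : ∀ t, Iop γ r t ≠ ⊤ := fun t =>
        ne_top_of_le_ne_top (ENNReal.mul_ne_top hC (Mm_lt_top hβ).ne)
          ((hIJ t).trans (Jj_le_const hρC t))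
      have hform : ∀ t, Iop γ r t = ENNReal.ofReal (Real.exp (γ.re * t))
          * ∫⁻ s in Set.Iio t, ENNReal.ofReal (Real.exp (-γ.re * s) * ‖r s‖) := by
        intro t
        rw [Iop, ← lintegral_const_mul' _ _ ENNReal.ofReal_ne_top,
          ← lintegral_indicator measurableSet_Iio]
        refine lintegral_congr fun s => ?_
        rw [gker_norm_neg hneg]
        by_cases hs : s ∈ Set.Iio t
        · rw [Set.indicator_of_mem hs, Set.indicator_of_mem hs,
            ← ENNReal.ofReal_mul (Real.exp_pos _).le, ← mul_assoc, ← Real.exp_add]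
          congr 3
          ring
        · rw [Set.indicator_of_notMem hs, Set.indicator_of_notMem hs]
      have hfac : ∀ t, (∫⁻ s in Set.Iio t, ENNReal.ofReal (Real.exp (-γ.re * s) * ‖r s‖)) ≠ ⊤ := by
        intro t
        intro htop
        apply hfin t
        rw [hform t, htop, ENNReal.mul_top (ENNReal.ofReal_pos.2 (Real.exp_pos _)).ne']
      have heq : (fun t => (Iop γ r t).toReal)
          = fun t => Real.exp (γ.re * t)
            * (∫⁻ s in Set.Iio t, ENNReal.ofReal (Real.exp (-γ.re * s) * ‖r s‖)).toReal := by
        refine funext fun t => ?_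
        rw [hform t, ENNReal.toReal_mul, ENNReal.toReal_ofReal (Real.exp_pos _).le]
      rw [heq]
      refine (Real.continuous_exp.comp (continuous_const.mul continuous_id)).mul ?_
      exact cont_Iio
        ((Real.continuous_exp.comp (continuous_const.mul continuous_id)).mul hrc.norm)
        (fun s => mul_nonneg (Real.exp_pos _).le (norm_nonneg _)) hfac
    · have hβeq : β = γ.re := abs_of_pos hpos
      have hIJ : ∀ t, Iop γ r t ≤ Jj β ρ t := by
        intro t
        refine lintegral_mono fun s => ?_
        rw [gker_norm_pos hpos]
        by_cases hs : s ∈ Set.Ioi t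
        · have hst : t < s := hs
          rw [Set.indicator_of_mem hs, ENNReal.ofReal_mul (Real.exp_pos _).le]
          rw [← hρeq]
          refine mul_le_mul_left (le_of_eq ?_) _
          rw [Kk]
          congr 1
          rw [abs_of_neg (by linarith : t - s < (0:ℝ))]
          rw [hβeq]; ring
        · rw [Set.indicator_of_notMem hs]; exact zero_le
      refine ⟨hIJ, ?_⟩
      have hfin : ∀ t, Iop γ r t ≠ ⊤ := fun t =>
        ne_top_of_le_ne_top (ENNReal.mul_ne_top hC (Mm_lt_top hβ).ne)
          ((hIJ t).trans (Jj_le_const hρC t))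
      have hform : ∀ t, Iop γ r t = ENNReal.ofReal (Real.exp (γ.re * t))
          * ∫⁻ s in Set.Ioi t, ENNReal.ofReal (Real.exp (-γ.re * s) * ‖r s‖) := by
        intro t
        rw [Iop, ← lintegral_const_mul' _ _ ENNReal.ofReal_ne_top,
          ← lintegral_indicator measurableSet_Ioi]
        refine lintegral_congr fun s => ?_
        rw [gker_norm_pos hpos]
        by_cases hs : s ∈ Set.Ioi t
        · rw [Set.indicator_of_mem hs, Set.indicator_of_mem hs,
            ← ENNReal.ofReal_mul (Real.exp_pos _).le, ← mul_assoc, ← Real.exp_add]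
          congr 3
          ring
        · rw [Set.indicator_of_notMem hs, Set.indicator_of_notMem hs]
      have hfac : ∀ t, (∫⁻ s in Set.Ioi t, ENNReal.ofReal (Real.exp (-γ.re * s) * ‖r s‖)) ≠ ⊤ := by
        intro t
        intro htop
        apply hfin t
        rw [hform t, htop, ENNReal.mul_top (ENNReal.ofReal_pos.2 (Real.exp_pos _)).ne']
      have heq : (fun t => (Iop γ r t).toReal)
          = fun t => Real.exp (γ.re * t)
            * (∫⁻ s in Set.Ioi t, ENNReal.ofReal (Real.exp (-γ.re * s) * ‖r s‖)).toReal := by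
        refine funext fun t => ?_
        rw [hform t, ENNReal.toReal_mul, ENNReal.toReal_ofReal (Real.exp_pos _).le]
      rw [heq]
      refine (Real.continuous_exp.comp (continuous_const.mul continuous_id)).mul ?_
      exact cont_Ioi
        ((Real.continuous_exp.comp (continuous_const.mul continuous_id)).mul hrc.norm)
        (fun s => mul_nonneg (Real.exp_pos _).le (norm_nonneg _)) hfac
  obtain ⟨hIJ, hcont⟩ := hsign
  -- shared consequences
  have hJle : ∀ t, Jj β ρ t ≤ C * Mm β := Jj_le_const hρC
  have hfin : ∀ t, Iop γ r t ≠ ⊤ := fun t =>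
    ne_top_of_le_ne_top (ENNReal.mul_ne_top hC (Mm_lt_top hβ).ne) ((hIJ t).trans (hJle t))
  have hbd : ∀ t, ‖(((Iop γ r t).toReal : ℝ) : ℂ)‖ ≤ (C * Mm β).toReal := by
    intro t
    rw [Complex.norm_real, Real.norm_eq_abs, abs_of_nonneg ENNReal.toReal_nonneg]
    exact ENNReal.toReal_mono (ENNReal.mul_ne_top hC (Mm_lt_top hβ).ne)
      ((hIJ t).trans (hJle t))
  have hBCb : BCb (fun t => (((Iop γ r t).toReal : ℝ) : ℂ)) :=
    ⟨Complex.continuous_ofReal.comp hcont, (C * Mm β).toReal, hbd⟩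
  have hIto0 : ∀ {l : Filter ℝ}, Tendsto (Jj β ρ) l (nhds 0) →
      Tendsto (fun t => (Iop γ r t).toReal) l (nhds 0) := by
    intro l hl
    have h1 : Tendsto (Iop γ r) l (nhds 0) :=
      tendsto_of_tendsto_of_tendsto_of_le_of_le tendsto_const_nhds hl
        (fun t => zero_le) hIJ
    have h2 := (ENNReal.tendsto_toReal (by simp : (0:ℝ≥0∞) ≠ ⊤)).comp h1
    simpa [Function.comp_def] using h2
  have hCto0 : ∀ {l : Filter ℝ}, Tendsto (Jj β ρ) l (nhds 0) →
      Tendsto (fun t => (((Iop γ r t).toReal : ℝ) : ℂ)) l (nhds 0) := by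
    intro l hl
    have h2 := (Complex.continuous_ofReal.tendsto 0).comp (hIto0 hl)
    simpa [Function.comp_def] using h2
  -- reflection
  set ρn : ℝ → ℝ≥0∞ := fun s => ρ (-s) with hρndef
  have hρnm : Measurable ρn := hρm.comp measurable_neg
  have hρnC : ∀ s, ρn s ≤ C := fun s => hρC (-s)
  have hρnt : ∀ s, ρn s ≠ ⊤ := fun s => hρt (-s)
  have hJneg : (fun t => Jj β ρ (-t)) = Jj β ρn := funext fun t => Jj_neg hρm t
  have hbotJ : Tendsto (Jj β ρn) atTop (nhds 0) → Tendsto (Jj β ρ) atBot (nhds 0) := by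
    intro h
    rw [← hJneg] at h
    have h2 := h.comp (tendsto_neg_atBot_atTop : Tendsto Neg.neg atBot (atTop : Filter ℝ))
    have h3 : ((fun t => Jj β ρ (-t)) ∘ Neg.neg) = Jj β ρ := funext fun t => by simp
    rwa [h3] at h2
  have hρtend : ∀ {l : Filter ℝ}, Tendsto r l (nhds 0) → Tendsto ρ l (nhds 0) := by
    intro l h
    have h2 := ENNReal.tendsto_ofReal (f := l) h.norm
    simp only [norm_zero, ENNReal.ofReal_zero] at h2
    have he : ρ = fun s => ENNReal.ofReal ‖r s‖ := funext hρeq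
    rw [he]
    exact h2
  -- Lp integrand identities
  have hnnC : ∀ t, (‖(((Iop γ r t).toReal : ℝ) : ℂ)‖₊ : ℝ≥0∞) = Iop γ r t := by
    intro t
    rw [← enorm_eq_nnnorm, ← ofReal_norm, Complex.norm_real, Real.norm_eq_abs,
      abs_of_nonneg ENNReal.toReal_nonneg, ENNReal.ofReal_toReal (hfin t)]
  have hnnR : ∀ t, (‖(Iop γ r t).toReal‖₊ : ℝ≥0∞) = Iop γ r t := by
    intro t
    rw [← enorm_eq_nnnorm, ← ofReal_norm, Real.norm_eq_abs,
      abs_of_nonneg ENNReal.toReal_nonneg, ENNReal.ofReal_toReal (hfin t)]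
  refine ⟨?_, ?_, ?_, ?_, ?_⟩
  -- (i)
  · rintro ⟨-, htop⟩
    exact ⟨hBCb, hCto0 (D1 hβ hC hρC (hρtend htop))⟩
  -- (ii)
  · rintro ⟨⟨-, htop⟩, hbot⟩
    refine ⟨⟨hBCb, hCto0 (D1 hβ hC hρC (hρtend htop))⟩, ?_⟩
    refine hCto0 (hbotJ (D1 hβ hC hρnC ?_))
    exact (hρtend hbot).comp (tendsto_neg_atTop_atBot : Tendsto Neg.neg atTop (atBot : Filter ℝ))
  -- (iii)
  · rintro ⟨-, hint⟩
    have hint' : (∫⁻ s in Set.Ioi (0:ℝ), ρ s ^ p) ≠ ⊤ := hint.ne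
    refine ⟨⟨hBCb, hCto0 (D2 hβ hp hρm hC hρC hρt hint')⟩, ⟨(C * Mm β).toReal,
      fun t _ => hbd t⟩, ?_⟩
    calc ∫⁻ t in Set.Ioi (0:ℝ), (‖(((Iop γ r t).toReal : ℝ) : ℂ)‖₊ : ℝ≥0∞) ^ p
        = ∫⁻ t in Set.Ioi (0:ℝ), Iop γ r t ^ p :=
          lintegral_congr fun t => by rw [hnnC]
      _ ≤ ∫⁻ t in Set.Ioi (0:ℝ), Jj β ρ t ^ p :=
          lintegral_mono fun t => ENNReal.rpow_le_rpow (hIJ t) hp0.le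
      _ < ⊤ := Plem hβ hp hρm hC hρC hρt hint'
  -- (iv)
  · intro hint
    have h1 : (∫⁻ s in Set.Ioi (0:ℝ), ρ s ^ p) ≠ ⊤ :=
      ((setLIntegral_le_lintegral _ _).trans_lt hint).ne
    have h2 : (∫⁻ s in Set.Ioi (0:ℝ), ρn s ^ p) ≠ ⊤ := by
      refine ((setLIntegral_le_lintegral _ _).trans_lt ?_).ne
      rw [show (fun s => ρn s ^ p) = fun s => (fun x => ρ x ^ p) (-s) from rfl,
        lintegral_comp_neg _ (hρm.pow_const _)]
      exact hint
    refine ⟨⟨⟨hBCb, hCto0 (D2 hβ hp hρm hC hρC hρt h1)⟩,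
      hCto0 (hbotJ (D2 hβ hp hρnm hC hρnC hρnt h2))⟩, ?_⟩
    calc ∫⁻ t, (‖(((Iop γ r t).toReal : ℝ) : ℂ)‖₊ : ℝ≥0∞) ^ p
        = ∫⁻ t, Iop γ r t ^ p := lintegral_congr fun t => by rw [hnnC]
      _ ≤ ∫⁻ t, Jj β ρ t ^ p :=
          lintegral_mono fun t => ENNReal.rpow_le_rpow (hIJ t) hp0.le
      _ ≤ (Mm β) ^ ((1 - 1/p) * p) * Mm β * ∫⁻ s, ρ s ^ p := Jj_young hβ hp hρm hρt
      _ < ⊤ := by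
          refine ENNReal.mul_lt_top (ENNReal.mul_ne_top ?_ (Mm_lt_top hβ).ne).lt_top hint
          refine ENNReal.rpow_ne_top_of_nonneg ?_ (Mm_lt_top hβ).ne
          have h3 : 1/p ≤ 1 := by rw [div_le_one hp0]; exact hp
          nlinarith
  -- (v)
  · intro hint
    have h2 : (∫⁻ s in Set.Ioi (0:ℝ), ρn s ^ p) ≠ ⊤ := by
      have he : ∫⁻ s in Set.Ioi (0:ℝ), ρn s ^ p = ∫⁻ s in Set.Iio (0:ℝ), ρ s ^ p := by
        have h3 := setLIntegral_neg (f := fun x => ρ x ^ p) (hρm.pow_const _)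
          (measurableSet_Ioi (a := (0:ℝ)))
        simp only [neg_Ioi, neg_zero] at h3
        exact h3.symm
      rw [he]
      exact ((lintegral_mono_set Set.Iio_subset_Iic_self).trans_lt hint).ne
    refine ⟨hIto0 (hbotJ (D2 hβ hp hρnm hC hρnC hρnt h2)), ?_⟩
    have hrefl : ∫⁻ s in Set.Iic (0:ℝ), Jj β ρ s ^ p
        = ∫⁻ s in Set.Ioi (0:ℝ), Jj β ρn s ^ p := by
      have h3 := setLIntegral_neg (f := fun t => Jj β ρ t ^ p)
        ((Jj_meas hρm).pow_const _) (measurableSet_Ici (a := (0:ℝ)))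
      simp only [neg_Ici, neg_zero] at h3
      rw [h3]
      have h4 : ∀ t, Jj β ρ (-t) ^ p = Jj β ρn t ^ p := fun t => by rw [Jj_neg hρm t]
      rw [lintegral_congr h4]
      rw [Measure.restrict_congr_set Ioi_ae_eq_Ici.symm]
    calc ∫⁻ s in Set.Iic (0:ℝ), (‖(Iop γ r s).toReal‖₊ : ℝ≥0∞) ^ p
        = ∫⁻ s in Set.Iic (0:ℝ), Iop γ r s ^ p := lintegral_congr fun s => by rw [hnnR]
      _ ≤ ∫⁻ s in Set.Iic (0:ℝ), Jj β ρ s ^ p :=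
          lintegral_mono fun s => ENNReal.rpow_le_rpow (hIJ s) hp0.le
      _ = ∫⁻ s in Set.Ioi (0:ℝ), Jj β ρn s ^ p := hrefl
      _ < ⊤ := Plem hβ hp hρnm hC hρnC hρnt h2

end
end

section
/- Let ω ∈ ℂ with Re ω ≠ 0. If f : ℝ → ℂ is asymptotically almost periodic (f ∈ AAP), then G_ω[f] ∈ AAP; if f ∈ AAP_0, then G_ω[f] ∈ AAP_0. -/
open MeasureTheory Filter Topology
open scoped ENNReal NNReal

noncomputable section

section Stmt4Aux

open Set

variable (ω : ℂ)

lemma gker_shift_s4 (t s : ℝ) : gker ω t s = gker ω (t - s) 0 := by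
  simp [gker]

lemma gker_measurable : Measurable (fun u : ℝ => gker ω u 0) := by
  unfold gker
  refine Measurable.ite ?_ ?_ measurable_const
  · exact measurableSet_lt (measurable_const.mul (measurable_id.sub measurable_const))
      measurable_const
  · fun_prop

lemma gker_norm_le (hω : ω.re ≠ 0) (u : ℝ) :
    ‖gker ω u 0‖ ≤ Real.exp (-(|ω.re| * |u|)) := by
  unfold gker
  split_ifs with h
  · rw [sub_zero] at h
    have habs : ‖((-Real.sign ω.re : ℝ) : ℂ) * Complex.exp (ω * ((u - 0 : ℝ) : ℂ))‖
        = |Real.sign ω.re| * Real.exp (ω.re * u) := by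
      rw [norm_mul, Complex.norm_real, norm_neg, Real.norm_eq_abs,
        Complex.norm_exp]
      congr 2
      simp [Complex.mul_re]
    rw [habs]
    rcases lt_or_gt_of_ne hω with hneg | hpos
    · rw [Real.sign_of_neg hneg] at h ⊢
      have hu : 0 < u := by nlinarith
      rw [abs_of_neg hneg, abs_of_pos hu, abs_of_neg (by norm_num : (-1:ℝ) < 0)]
      rw [neg_neg, one_mul]
      apply le_of_eq; congr 1; ring
    · rw [Real.sign_of_pos hpos] at h ⊢
      have hu : u < 0 := by nlinarith
      rw [abs_of_pos hpos, abs_of_neg hu, abs_of_pos (by norm_num : (0:ℝ) < 1)]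
      rw [one_mul]
      apply le_of_eq; congr 1; ring
  · simp [Real.exp_nonneg]

lemma integrable_exp_neg_abs {c : ℝ} (hc : 0 < c) :
    Integrable (fun x : ℝ => Real.exp (-(c * |x|))) := by
  have h1 : IntegrableOn (fun x : ℝ => Real.exp (-(c * |x|))) (Ioi 0) := by
    refine (exp_neg_integrableOn_Ioi 0 hc).congr_fun (fun x hx => ?_) measurableSet_Ioi
    rw [abs_of_pos hx]; ring_nf
  have hind : Integrable (Set.indicator (Ioi 0) (fun x : ℝ => Real.exp (-(c * |x|)))) :=
    h1.integrable_indicator measurableSet_Ioi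
  have hneg := hind.comp_neg
  have heq : (fun x : ℝ => Set.indicator (Ioi 0) (fun x : ℝ => Real.exp (-(c * |x|))) (-x))
      = Set.indicator (Iio 0) (fun x : ℝ => Real.exp (-(c * |x|))) := by
    funext x
    by_cases hx : x < 0
    · rw [Set.indicator_of_mem (by simpa using hx : -x ∈ Ioi (0:ℝ)),
        Set.indicator_of_mem (by simpa using hx : x ∈ Iio (0:ℝ)), abs_neg]
    · rw [Set.indicator_of_notMem (by simpa using hx), Set.indicator_of_notMem (by simpa using hx)]
  rw [heq] at hneg
  have h2 : IntegrableOn (fun x : ℝ => Real.exp (-(c * |x|))) (Iio 0) :=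
    (integrable_indicator_iff measurableSet_Iio).mp hneg
  have h1' : IntegrableOn (fun x : ℝ => Real.exp (-(c * |x|))) (Ici 0) := by
    rwa [integrableOn_Ici_iff_integrableOn_Ioi]
  have := h2.union h1'
  rwa [Iio_union_Ici, integrableOn_univ] at this

lemma gker_integrable (hω : ω.re ≠ 0) : Integrable (fun u : ℝ => gker ω u 0) := by
  refine Integrable.mono' (integrable_exp_neg_abs (abs_pos.mpr hω))
    (gker_measurable ω).aestronglyMeasurable (ae_of_all _ (gker_norm_le ω hω))

/-- `∫ ‖gker ω u 0‖ du`. -/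
noncomputable def Inorm : ℝ := ∫ u : ℝ, ‖gker ω u 0‖

lemma Inorm_nonneg : 0 ≤ Inorm ω :=
  MeasureTheory.integral_nonneg fun _ => norm_nonneg _

lemma Gop_rep (f : ℝ → ℂ) (t : ℝ) : Gop ω f t = ∫ u : ℝ, gker ω u 0 * f (t - u) := by
  have h := MeasureTheory.integral_sub_left_eq_self (fun u : ℝ => gker ω u 0 * f (t - u))
    volume t
  rw [Gop, ← h]
  refine MeasureTheory.integral_congr_ae (Filter.Eventually.of_forall fun s => ?_)
  show gker ω t s * f s = gker ω (t - s) 0 * f (t - (t - s))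
  rw [gker_shift_s4, sub_sub_cancel]

lemma Gop_shift (f : ℝ → ℂ) (t c : ℝ) : Gop ω f (t + c) = Gop ω (fun s => f (s + c)) t := by
  rw [Gop_rep, Gop_rep]
  simp only [show ∀ u : ℝ, t + c - u = t - u + c from fun u => by ring]

lemma Gop_norm_le (hω : ω.re ≠ 0) (f : ℝ → ℂ) (C : ℝ) (hC : ∀ s, ‖f s‖ ≤ C) (t : ℝ) :
    ‖Gop ω f t‖ ≤ Inorm ω * C := by
  rw [Gop_rep]
  have h1 : ‖∫ u : ℝ, gker ω u 0 * f (t - u)‖ ≤ ∫ u : ℝ, ‖gker ω u 0‖ * C := by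
    refine MeasureTheory.norm_integral_le_of_norm_le ((gker_integrable ω hω).norm.mul_const C)
      (ae_of_all _ fun u => ?_)
    rw [norm_mul]
    exact mul_le_mul_of_nonneg_left (hC _) (norm_nonneg _)
  rwa [MeasureTheory.integral_mul_const] at h1

lemma integrable_gker_mul (hω : ω.re ≠ 0) {f : ℝ → ℂ}
    (hfm : AEStronglyMeasurable f volume) (C : ℝ) (hC : ∀ s, ‖f s‖ ≤ C) (t : ℝ) :
    Integrable (fun s : ℝ => gker ω t s * f s) := by
  have hK : Integrable (fun s : ℝ => gker ω (t - s) 0) :=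
    (gker_integrable ω hω).comp_sub_left t
  have h := hK.bdd_mul hfm (ae_of_all _ hC)
  refine h.congr (ae_of_all _ fun s => ?_)
  show f s * gker ω (t - s) 0 = gker ω t s * f s
  rw [gker_shift_s4 ω t s, mul_comm]

lemma Gop_add (hω : ω.re ≠ 0) {f g : ℝ → ℂ} (hf : Continuous f) (hg : Continuous g)
    (Cf Cg : ℝ) (hCf : ∀ s, ‖f s‖ ≤ Cf) (hCg : ∀ s, ‖g s‖ ≤ Cg) (t : ℝ) :
    Gop ω (fun s => f s + g s) t = Gop ω f t + Gop ω g t := by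
  unfold Gop
  simp only [mul_add]
  exact MeasureTheory.integral_add
    (integrable_gker_mul ω hω hf.aestronglyMeasurable Cf hCf t)
    (integrable_gker_mul ω hω hg.aestronglyMeasurable Cg hCg t)

lemma Gop_sub (hω : ω.re ≠ 0) {f g : ℝ → ℂ} (hf : Continuous f) (hg : Continuous g)
    (Cf Cg : ℝ) (hCf : ∀ s, ‖f s‖ ≤ Cf) (hCg : ∀ s, ‖g s‖ ≤ Cg) (t : ℝ) :
    Gop ω f t - Gop ω g t = Gop ω (fun s => f s - g s) t := by
  unfold Gop
  rw [← MeasureTheory.integral_sub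
    (integrable_gker_mul ω hω hf.aestronglyMeasurable Cf hCf t)
    (integrable_gker_mul ω hω hg.aestronglyMeasurable Cg hCg t)]
  simp only [mul_sub]

lemma Gop_continuous (hω : ω.re ≠ 0) {f : ℝ → ℂ} (hf : Continuous f) (C : ℝ)
    (hC : ∀ s, ‖f s‖ ≤ C) : Continuous (Gop ω f) := by
  rw [continuous_iff_seqContinuous]
  intro x p hx
  have : ∀ t : ℝ, Gop ω f t = ∫ u : ℝ, gker ω u 0 * f (t - u) := Gop_rep ω f
  simp only [Function.comp_def, this]
  refine MeasureTheory.tendsto_integral_of_dominated_convergence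
    (fun u => ‖gker ω u 0‖ * C) (fun n => ?_) ((gker_integrable ω hω).norm.mul_const C)
    (fun n => ae_of_all _ fun u => ?_) (ae_of_all _ fun u => ?_)
  · exact ((gker_measurable ω).aestronglyMeasurable).mul
      ((hf.comp (continuous_const.sub continuous_id)).aestronglyMeasurable)
  · rw [norm_mul]
    exact mul_le_mul_of_nonneg_left (hC _) (norm_nonneg _)
  · exact ((hf.tendsto (p - u)).comp (hx.sub_const u)).const_mul _

lemma Gop_decay (hω : ω.re ≠ 0) {f : ℝ → ℂ} (hf : Continuous f) (C : ℝ)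
    (hC : ∀ s, ‖f s‖ ≤ C) {l : Filter ℝ} [l.IsCountablyGenerated]
    (hl : ∀ u : ℝ, Tendsto (fun t : ℝ => t - u) l l)
    (h0 : Tendsto f l (𝓝 0)) : Tendsto (Gop ω f) l (𝓝 0) := by
  rw [Filter.tendsto_iff_seq_tendsto]
  intro x hx
  have hrep : ∀ t : ℝ, Gop ω f t = ∫ u : ℝ, gker ω u 0 * f (t - u) := Gop_rep ω f
  simp only [Function.comp_def, hrep]
  have h := MeasureTheory.tendsto_integral_of_dominated_convergence
    (F := fun n (u : ℝ) => gker ω u 0 * f (x n - u)) (f := fun _ : ℝ => (0 : ℂ))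
    (fun u => ‖gker ω u 0‖ * C) (fun n => ?_) ((gker_integrable ω hω).norm.mul_const C)
    (fun n => ae_of_all _ fun u => ?_) (ae_of_all _ fun u => ?_)
  · simpa using h
  · exact ((gker_measurable ω).aestronglyMeasurable).mul
      ((hf.comp (continuous_const.sub continuous_id)).aestronglyMeasurable)
  · rw [norm_mul]
    exact mul_le_mul_of_nonneg_left (hC _) (norm_nonneg _)
  · have := (h0.comp ((hl u).comp hx)).const_mul (gker ω u 0)
    simpa using this

lemma AP_bounded {φ : ℝ → ℂ} (h : AP φ) : ∃ M : ℝ, ∀ t, ‖φ t‖ ≤ M := by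
  by_contra hb
  push_neg at hb
  choose b hbn using fun n : ℕ => hb (n : ℝ)
  obtain ⟨ψ, hψ, g, hg⟩ := h.2 b
  have h0 : Tendsto (fun m => φ ((0 : ℝ) + b (ψ m))) atTop (𝓝 (g 0)) := hg.tendsto_at 0
  have hn : Tendsto (fun m => ‖φ ((0 : ℝ) + b (ψ m))‖) atTop (𝓝 ‖g 0‖) := h0.norm
  have hev : ∀ᶠ m in atTop, ‖φ ((0 : ℝ) + b (ψ m))‖ < ‖g 0‖ + 1 :=
    hn.eventually_lt_const (lt_add_one _)
  obtain ⟨N, hN⟩ := Filter.eventually_atTop.mp hev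
  set m := max N (⌈‖g 0‖ + 1⌉₊) with hm
  have h1 : ‖φ ((0 : ℝ) + b (ψ m))‖ < ‖g 0‖ + 1 := hN m (le_max_left _ _)
  have h2 : (ψ m : ℝ) < ‖φ (b (ψ m))‖ := hbn (ψ m)
  have h3 : ‖g 0‖ + 1 ≤ (m : ℝ) :=
    (Nat.le_ceil _).trans (Nat.cast_le.mpr (le_max_right _ _))
  have h4 : (m : ℝ) ≤ (ψ m : ℝ) := Nat.cast_le.mpr hψ.le_apply
  rw [zero_add] at h1
  linarith

lemma AP_Gop (hω : ω.re ≠ 0) {φ : ℝ → ℂ} (hφ : AP φ) : AP (Gop ω φ) := by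
  obtain ⟨M, hM⟩ := AP_bounded hφ
  refine ⟨Gop_continuous ω hω hφ.1 M hM, fun b => ?_⟩
  obtain ⟨ψ, hψ, g, hg⟩ := hφ.2 b
  refine ⟨ψ, hψ, Gop ω g, ?_⟩
  have hgc : Continuous g :=
    hg.continuous (Filter.Frequently.of_forall fun m =>
      hφ.1.comp (continuous_id.add continuous_const))
  have hgM : ∀ s, ‖g s‖ ≤ M := fun s =>
    le_of_tendsto (hg.tendsto_at s).norm (Filter.Eventually.of_forall fun m => hM _)
  rw [Metric.tendstoUniformly_iff]
  intro ε hε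
  have hI0 : (0 : ℝ) ≤ Inorm ω := Inorm_nonneg ω
  have hε' : 0 < ε / (Inorm ω + 1) := by positivity
  filter_upwards [Metric.tendstoUniformly_iff.mp hg (ε / (Inorm ω + 1)) hε'] with m hm t
  rw [Gop_shift]
  have hbnd : ∀ s, ‖g s - φ (s + b (ψ m))‖ ≤ ε / (Inorm ω + 1) := fun s => by
    rw [← dist_eq_norm]; exact (hm s).le
  have hφc : Continuous (fun s => φ (s + b (ψ m))) :=
    hφ.1.comp (continuous_id.add continuous_const)
  have hφM : ∀ s, ‖φ (s + b (ψ m))‖ ≤ M := fun s => hM _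
  rw [dist_eq_norm, Gop_sub ω hω hgc hφc M M hgM hφM]
  calc ‖Gop ω (fun s => g s - φ (s + b (ψ m))) t‖
      ≤ Inorm ω * (ε / (Inorm ω + 1)) := Gop_norm_le ω hω _ _ hbnd t
    _ < (Inorm ω + 1) * (ε / (Inorm ω + 1)) :=
        mul_lt_mul_of_pos_right (lt_add_one _) hε'
    _ = ε := by field_simp

lemma AAP_Gop_aux (hω : ω.re ≠ 0) {f φ g : ℝ → ℂ} (hbcb : BCb f)
    (hdec : ∀ t, f t = φ t + g t) (hAP : AP φ) :
    BCb (Gop ω f) ∧ (∀ t, Gop ω f t = Gop ω φ t + Gop ω g t) ∧ AP (Gop ω φ)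
      ∧ Continuous g ∧ ∃ Cg, ∀ s, ‖g s‖ ≤ Cg := by
  obtain ⟨hfc, C, hC⟩ := hbcb
  obtain ⟨M, hM⟩ := AP_bounded hAP
  have hφc : Continuous φ := hAP.1
  have hge : ∀ t, g t = f t - φ t := fun t => by rw [hdec t]; ring
  have hgc : Continuous g := by
    have : g = fun t => f t - φ t := funext hge
    rw [this]; exact hfc.sub hφc
  have hgB : ∀ s, ‖g s‖ ≤ C + M := fun s => by
    rw [hge s]
    exact (norm_sub_le _ _).trans (add_le_add (hC s) (hM s))
  refine ⟨⟨Gop_continuous ω hω hfc C hC, Inorm ω * C, Gop_norm_le ω hω f C hC⟩,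
    fun t => ?_, AP_Gop ω hω hAP, hgc, ⟨C + M, hgB⟩⟩
  have h1 : Gop ω f t = Gop ω (fun s => φ s + g s) t := by
    unfold Gop; simp only [hdec]
  rw [h1]
  exact Gop_add ω hω hφc hgc M (C + M) hM hgB t

end Stmt4Aux

/-- `G_ω` preserves asymptotic almost periodicity (and the `AAP₀` class). -/
theorem stmt4 (ω : ℂ) (hω : ω.re ≠ 0) (f : ℝ → ℂ) :
    (AAP f → AAP (Gop ω f)) ∧ (AAP0 f → AAP0 (Gop ω f)) := by
  have htop : ∀ u : ℝ, Tendsto (fun t : ℝ => t - u) atTop atTop := fun u => by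
    simpa [sub_eq_add_neg] using tendsto_atTop_add_const_right atTop (-u) tendsto_id
  have hbot : ∀ u : ℝ, Tendsto (fun t : ℝ => t - u) atBot atBot := fun u => by
    simpa [sub_eq_add_neg] using tendsto_atBot_add_const_right atBot (-u) tendsto_id
  constructor
  · rintro ⟨hbcb, φ, g, hdec, hAP, hg⟩
    obtain ⟨hbcb', hdec', hAP', hgc, Cg, hCg⟩ := AAP_Gop_aux ω hω hbcb hdec hAP
    exact ⟨hbcb', Gop ω φ, Gop ω g, hdec', hAP',
      Gop_decay ω hω hgc Cg hCg htop hg⟩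
  · rintro ⟨hbcb, φ, g, hdec, hAP, hgtop, hgbot⟩
    obtain ⟨hbcb', hdec', hAP', hgc, Cg, hCg⟩ := AAP_Gop_aux ω hω hbcb hdec hAP
    exact ⟨hbcb', Gop ω φ, Gop ω g, hdec', hAP',
      Gop_decay ω hω hgc Cg hCg htop hgtop,
      Gop_decay ω hω hgc Cg hCg hbot hgbot⟩

end
end
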